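/- arXiv:1712.06907 — 3 statements merged into one kernel-verified Lean document; each statement's English description precedes it below -/
import Mathlib

section
/- Every nonzero codeword of the quasi-cyclic code Q_q(f,g,h) has Hamming weight at least d_q^e(f,g,h), where d_q^e(f,g,h) is the minimum of the four quantities: d([g(x)]); d([(x^n-1)/gcd(x^n-1, h(x))]); d([lcm(f(x), g(x)/gcd(g(x), h(x)))]); and d([f(x)]) + d([gcd(h(x)f(x), g(x))]). -/
open Polynomial Finset

noncomputable section

variable {F : Type*} [Field F] [DecidableEq F]

/-- The vector in `F^n` corresponding to the residue class of a polynomial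
in `F[x]/(x^n-1)`: the coefficients of its canonical representative of degree `< n`. -/
def vecOf (n : ℕ) : F[X] →ₗ[F] (Fin n → F) where
  toFun a := fun i => (a %ₘ (X ^ n - 1)).coeff i
  map_add' a b := by
    funext i
    simp [Polynomial.add_modByMonic]
  map_smul' c a := by
    funext i
    simp [Polynomial.smul_modByMonic]

/-- The quasi-cyclic code `Q_q(f,g,h)`: the `F`-subspace of `F^n × F^n ≃ F^{2n}`
corresponding to the `R`-submodule of `R²` generated by `([f],[h f])` and `(0,[g])`. -/
def QCcode (n : ℕ) (f g h : F[X]) : Submodule F ((Fin n → F) × (Fin n → F)) where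
  carrier := {v | ∃ a b : F[X], v = (vecOf n (a * f), vecOf n (a * h * f + b * g))}
  zero_mem' := ⟨0, 0, by simp; rfl⟩
  add_mem' := by
    rintro v w ⟨a1, b1, rfl⟩ ⟨a2, b2, rfl⟩
    refine ⟨a1 + a2, b1 + b2, ?_⟩
    have h1 : (a1 + a2) * f = a1 * f + a2 * f := by ring
    have h2 : (a1 + a2) * h * f + (b1 + b2) * g
        = (a1 * h * f + b1 * g) + (a2 * h * f + b2 * g) := by ring
    rw [h1, h2, map_add (vecOf n) (a1 * f) (a2 * f),
      map_add (vecOf n) (a1 * h * f + b1 * g) (a2 * h * f + b2 * g)]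
    rfl
  smul_mem' := by
    rintro c v ⟨a, b, rfl⟩
    refine ⟨c • a, c • b, ?_⟩
    have h1 : (c • a) * f = c • (a * f) := smul_mul_assoc c a f
    have h2 : (c • a) * h * f + (c • b) * g = c • (a * h * f + b * g) := by
      rw [smul_add, smul_mul_assoc, smul_mul_assoc, smul_mul_assoc]
    rw [h1, h2, map_smul, map_smul]
    rfl

/-- Hamming weight of a vector. -/
def hWt {n : ℕ} (x : Fin n → F) : ℕ := Nat.card {i : Fin n // x i ≠ 0}

/-- Hamming weight of a vector of `F^{2n}` presented as a pair. -/
def hWt2 {n : ℕ} (v : (Fin n → F) × (Fin n → F)) : ℕ := hWt v.1 + hWt v.2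

/-- Symplectic weight. -/
def sWt {n : ℕ} (v : (Fin n → F) × (Fin n → F)) : ℕ :=
  Nat.card {i : Fin n // (v.1 i, v.2 i) ≠ (0, 0)}

/-- Euclidean inner product on `F^n`. -/
def eInn {n : ℕ} (x y : Fin n → F) : F := ∑ i, x i * y i

/-- Euclidean inner product on `F^{2n}`. -/
def eInn2 {n : ℕ} (x y : (Fin n → F) × (Fin n → F)) : F := eInn x.1 y.1 + eInn x.2 y.2

/-- Symplectic inner product on `F^{2n}`. -/
def sInn {n : ℕ} (x y : (Fin n → F) × (Fin n → F)) : F :=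
  ∑ i, (x.1 i * y.2 i - x.2 i * y.1 i)

/-- Hermitian inner product on `F^{2n}` (with respect to `x ↦ x^q`). -/
def hInn2 (q : ℕ) {n : ℕ} (x y : (Fin n → F) × (Fin n → F)) : F :=
  (∑ i, x.1 i ^ q * y.1 i) + ∑ i, x.2 i ^ q * y.2 i

def sDualSet {n : ℕ} (C : Set ((Fin n → F) × (Fin n → F))) : Set ((Fin n → F) × (Fin n → F)) :=
  {x | ∀ y ∈ C, sInn x y = 0}

def eDualSet {n : ℕ} (C : Set ((Fin n → F) × (Fin n → F))) : Set ((Fin n → F) × (Fin n → F)) :=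
  {x | ∀ y ∈ C, eInn2 x y = 0}

def hDualSet (q : ℕ) {n : ℕ} (C : Set ((Fin n → F) × (Fin n → F))) :
    Set ((Fin n → F) × (Fin n → F)) :=
  {x | ∀ y ∈ C, hInn2 q x y = 0}

/-- `x^n f(1/x)` for `f` of degree `< n`. -/
def barPoly (n : ℕ) (f : F[X]) : F[X] := ∑ i ∈ f.support, C (f.coeff i) * X ^ (n - i)

/-- `f^⊥ = x^{deg f'} f'(1/x)` where `f f' = x^n - 1`. -/
def perpPoly (n : ℕ) (f : F[X]) : F[X] := ((X ^ n - 1) /ₘ f).reverse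

/-- coefficientwise `q`-th power. -/
def polyQ (q : ℕ) (f : F[X]) : F[X] := ∑ i ∈ f.support, C (f.coeff i ^ q) * X ^ i

/-- minimum Hamming weight of the cyclic code generated by `[u]`. -/
def cycDist (n : ℕ) (u : F[X]) : ℕ :=
  sInf {w | ∃ a : F[X], vecOf n (a * u) ≠ 0 ∧ w = hWt (vecOf n (a * u))}

/-- The general QC set generated by `([u₁],[v₁])` and `([u₂],[v₂])`. -/
def QCspan (n : ℕ) (u₁ v₁ u₂ v₂ : F[X]) : Set ((Fin n → F) × (Fin n → F)) :=
  {w | ∃ a b : F[X], w = (vecOf n (a * u₁ + b * u₂), vecOf n (a * v₁ + b * v₂))}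

/-- The lower bound `d_q(f,g,h)` for the symplectic weight (a rational number). -/
def dSymp (q n : ℕ) (f g h : F[X]) : ℚ :=
  min (min (min (cycDist n g : ℚ)
    (cycDist n ((X ^ n - 1) / GCDMonoid.gcd (X ^ n - 1) h) : ℚ))
    (cycDist n (GCDMonoid.lcm f (g / GCDMonoid.gcd g h)) : ℚ))
    ((cycDist n f + cycDist n (GCDMonoid.gcd (h * f) g) + ((q : ℚ) - 1) * cycDist n (GCDMonoid.gcd f g)) / q)

/-- The lower bound `d_q^e(f,g,h)` for the minimum distance. -/
def dEucl (n : ℕ) (f g h : F[X]) : ℕ :=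
  min (min (min (cycDist n g)
    (cycDist n ((X ^ n - 1) / GCDMonoid.gcd (X ^ n - 1) h)))
    (cycDist n (GCDMonoid.lcm f (g / GCDMonoid.gcd g h))))
    (cycDist n f + cycDist n (GCDMonoid.gcd (h * f) g))

lemma modPoly_monic {n : ℕ} (hn : 0 < n) : (X ^ n - 1 : F[X]).Monic := by
  simpa using monic_X_pow_sub_C (1 : F) hn.ne'

lemma vecOf_eq_zero_iff {n : ℕ} (hn : 0 < n) (w : F[X]) :
    vecOf n w = (0 : Fin n → F) ↔ (X ^ n - 1 : F[X]) ∣ w := by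
  rw [← modByMonic_eq_zero_iff_dvd (modPoly_monic hn)]
  constructor
  · intro h0
    ext i
    by_cases hi : i < n
    · simpa [vecOf] using congrFun h0 ⟨i, hi⟩
    · refine coeff_eq_zero_of_degree_lt (lt_of_lt_of_le
        (degree_modByMonic_lt w (modPoly_monic hn)) ?_)
      have : (X ^ n - 1 : F[X]).degree = n := by
        simpa using degree_X_pow_sub_C hn (1 : F)
      rw [this]
      exact_mod_cast Nat.le_of_not_lt hi
  · intro h0
    funext i
    simp [vecOf, h0]

lemma cycDist_le {n : ℕ} {u a : F[X]} (hne : vecOf n (a * u) ≠ (0 : Fin n → F)) :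
    cycDist n u ≤ hWt (vecOf n (a * u)) :=
  Nat.sInf_le ⟨a, hne, rfl⟩

/-- `d_q^e(f,g,h)` is a lower bound for the minimum Hamming weight
of `Q_q(f,g,h)`. -/
theorem stmt14 [Fintype F] (n : ℕ) (hn : 0 < n) (f g h : F[X])
    (hf : f.Monic) (hg : g.Monic) (hh : h.Monic)
    (hfd : f.degree < n) (hgd : g.degree < n) (hhd : h.degree < n)
    (hfdvd : f ∣ X ^ n - 1) (hgdvd : g ∣ X ^ n - 1) :
    ∀ v ∈ QCcode n f g h, v ≠ 0 → hWt2 v ≥ dEucl n f g h := by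
  rintro v ⟨a, b, rfl⟩ hv
  have hXn : (X ^ n - 1 : F[X]).Monic := modPoly_monic hn
  by_cases h1 : vecOf n (a * f) = (0 : Fin n → F)
  · -- first component is zero: use the bound `d([g])`
    have hdvd : (X ^ n - 1 : F[X]) ∣ a * f := (vecOf_eq_zero_iff hn _).mp h1
    have hdvd2 : (X ^ n - 1 : F[X]) ∣ a * h * f := by
      have : a * h * f = a * f * h := by ring
      rw [this]; exact hdvd.mul_right h
    have h2 : vecOf n (a * h * f + b * g) = vecOf n (b * g) := by
      rw [map_add, (vecOf_eq_zero_iff hn _).mpr hdvd2, zero_add]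
    have hne2 : vecOf n (b * g) ≠ (0 : Fin n → F) := by
      intro h0
      exact hv (Prod.ext h1 (h2.trans h0))
    have hb1 : dEucl n f g h ≤ cycDist n g :=
      le_trans (min_le_left _ _) (le_trans (min_le_left _ _) (min_le_left _ _))
    have hb2 : cycDist n g ≤ hWt (vecOf n (b * g)) := cycDist_le hne2
    calc dEucl n f g h ≤ hWt (vecOf n (b * g)) := le_trans hb1 hb2
      _ = hWt (vecOf n (a * h * f + b * g)) := by rw [h2]
      _ ≤ hWt2 (vecOf n (a * f), vecOf n (a * h * f + b * g)) := Nat.le_add_left _ _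
  · have hwf : cycDist n f ≤ hWt (vecOf n (a * f)) := cycDist_le h1
    by_cases h2 : vecOf n (a * h * f + b * g) = (0 : Fin n → F)
    · -- second component is zero: use the lcm bound
      have hdvd : (X ^ n - 1 : F[X]) ∣ a * h * f + b * g := (vecOf_eq_zero_iff hn _).mp h2
      have hgdvd2 : g ∣ a * h * f := by
        have h3 : g ∣ a * h * f + b * g := hgdvd.trans hdvd
        have h4 : g ∣ b * g := dvd_mul_left g b
        simpa using dvd_sub h3 h4
      have hg0 : g ≠ 0 := hg.ne_zero
      have hh0 : h ≠ 0 := hh.ne_zero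
      set d := GCDMonoid.gcd g h with hd
      have hcop : IsCoprime (g / d) (h / d) := isCoprime_div_gcd_div_gcd hh0
      have hgd : d * (g / d) = g := EuclideanDomain.mul_div_cancel'
        (gcd_ne_zero_of_right hh0) (gcd_dvd_left g h)
      have hhd' : d * (h / d) = h := EuclideanDomain.mul_div_cancel'
        (gcd_ne_zero_of_right hh0) (gcd_dvd_right g h)
      have hd0 : d ≠ 0 := gcd_ne_zero_of_right hh0
      -- g/d ∣ a * (h/d) * f
      have step : (g / d) ∣ a * (h / d) * f := by
        have : d * (g / d) ∣ d * (a * (h / d) * f) := by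
          rw [hgd]
          have : d * (a * (h / d) * f) = a * (d * (h / d)) * f := by ring
          rw [this, hhd']
          exact hgdvd2
        exact (mul_dvd_mul_iff_left hd0).mp this
      have step2 : (g / d) ∣ a * f := by
        have : (g / d) ∣ a * f * (h / d) := by
          have e : a * f * (h / d) = a * (h / d) * f := by ring
          rw [e]; exact step
        exact hcop.dvd_of_dvd_mul_right this
      have hlcm : GCDMonoid.lcm f (g / d) ∣ a * f := lcm_dvd (dvd_mul_left f a) step2
      obtain ⟨c, hc⟩ := hlcm
      have hc' : a * f = c * GCDMonoid.lcm f (g / d) := by rw [hc]; ring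
      have hne : vecOf n (c * GCDMonoid.lcm f (g / d)) ≠ (0 : Fin n → F) := by
        rw [← hc']; exact h1
      have hb2 : cycDist n (GCDMonoid.lcm f (g / d)) ≤ hWt (vecOf n (a * f)) := by
        rw [hc']; exact cycDist_le hne
      have hb1 : dEucl n f g h ≤ cycDist n (GCDMonoid.lcm f (g / d)) :=
        le_trans (min_le_left _ _) (min_le_right _ _)
      calc dEucl n f g h ≤ hWt (vecOf n (a * f)) := le_trans hb1 hb2
        _ ≤ hWt2 (vecOf n (a * f), vecOf n (a * h * f + b * g)) := Nat.le_add_right _ _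
    · -- both components nonzero: use `d([f]) + d([gcd(hf,g)])`
      set e := GCDMonoid.gcd (h * f) g with he
      have hdvd : e ∣ a * h * f + b * g := by
        refine dvd_add ?_ ((gcd_dvd_right (h * f) g).mul_left b)
        have : a * h * f = a * (h * f) := by ring
        rw [this]
        exact (gcd_dvd_left (h * f) g).mul_left a
      obtain ⟨c, hc⟩ := hdvd
      have hc' : a * h * f + b * g = c * e := by rw [hc]; ring
      have hne : vecOf n (c * e) ≠ (0 : Fin n → F) := by rw [← hc']; exact h2
      have hb2 : cycDist n e ≤ hWt (vecOf n (a * h * f + b * g)) := by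
        rw [hc']; exact cycDist_le hne
      have hb1 : dEucl n f g h ≤ cycDist n f + cycDist n e := min_le_right _ _
      calc dEucl n f g h ≤ cycDist n f + cycDist n e := hb1
        _ ≤ hWt (vecOf n (a * f)) + hWt (vecOf n (a * h * f + b * g)) :=
            Nat.add_le_add hwf hb2
        _ = hWt2 (vecOf n (a * f), vecOf n (a * h * f + b * g)) := rfl

end
end

section
/- The Hermitian dual code Q_{q^2}(f,g,h)^{perp_h} of the quasi-cyclic code Q_{q^2}(f,g,h) over F_{q^2} equals the quasi-cyclic code of length 2n corresponding to the R-submodule of R^2 generated by ([-bar(h^{[q]})(x) (g^{[q]})^perp(x)], [(g^{[q]})^perp(x)]) and ([(f^{[q]})^perp(x)], 0). -/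
open Polynomial Finset

noncomputable section

variable {F : Type*} [Field F] [DecidableEq F]

/-! ### Auxiliary lemmas -/

section QCAux
set_option linter.unusedSectionVars false

lemma qcM_monic {n : ℕ} (hn : 0 < n) : ((X : F[X]) ^ n - 1).Monic := by
  simpa using monic_X_pow_sub_C (1 : F) hn.ne'

lemma qcM_natDegree {n : ℕ} : ((X : F[X]) ^ n - 1).natDegree = n := by
  simpa using natDegree_X_pow_sub_C (n := n) (r := (1 : F))

lemma qcM_degree {n : ℕ} (hn : 0 < n) : ((X : F[X]) ^ n - 1).degree = (n : WithBot ℕ) := by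
  rw [degree_eq_natDegree (qcM_monic hn).ne_zero, qcM_natDegree]

lemma qc_mod_degree_lt {n : ℕ} (hn : 0 < n) (p : F[X]) :
    (p %ₘ ((X : F[X]) ^ n - 1)).degree < (n : WithBot ℕ) := by
  have := degree_modByMonic_lt p (qcM_monic hn)
  rwa [qcM_degree hn] at this

lemma qc_mod_coeff {n : ℕ} (hn : 0 < n) (p : F[X]) {j : ℕ} (hj : n ≤ j) :
    (p %ₘ ((X : F[X]) ^ n - 1)).coeff j = 0 := by
  apply coeff_eq_zero_of_degree_lt
  exact lt_of_lt_of_le (qc_mod_degree_lt hn p) (by exact_mod_cast WithBot.coe_le_coe.mpr hj)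

lemma qc_mod_natDegree_lt {n : ℕ} (hn : 0 < n) (p : F[X]) :
    (p %ₘ ((X : F[X]) ^ n - 1)).natDegree < n := by
  by_cases h : p %ₘ ((X : F[X]) ^ n - 1) = 0
  · rw [h]; simpa using hn
  · exact (natDegree_lt_iff_degree_lt h).mpr (qc_mod_degree_lt hn p)

lemma qc_sub_mod_dvd {n : ℕ} (hn : 0 < n) (p : F[X]) :
    ((X : F[X]) ^ n - 1) ∣ p - p %ₘ ((X : F[X]) ^ n - 1) :=
  ⟨p /ₘ ((X : F[X]) ^ n - 1), by
    linear_combination -(modByMonic_add_div p ((X : F[X]) ^ n - 1))⟩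

lemma qc_mod_eq_of {n : ℕ} (hn : 0 < n) {p r : F[X]}
    (hdvd : ((X : F[X]) ^ n - 1) ∣ p - r) (hr : r.degree < (n : WithBot ℕ)) :
    p %ₘ ((X : F[X]) ^ n - 1) = r := by
  have h3 : r %ₘ ((X : F[X]) ^ n - 1) = r :=
    (modByMonic_eq_self_iff (qcM_monic hn)).mpr (by rw [qcM_degree hn]; exact hr)
  have h1 : (p - r) %ₘ ((X : F[X]) ^ n - 1) = 0 :=
    (modByMonic_eq_zero_iff_dvd (qcM_monic hn)).mpr hdvd
  have hneg : (-r) %ₘ ((X : F[X]) ^ n - 1) = -(r %ₘ ((X : F[X]) ^ n - 1)) := by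
    rw [← neg_one_smul F r, smul_modByMonic, neg_one_smul]
  have h2 : (p - r) %ₘ ((X : F[X]) ^ n - 1)
      = p %ₘ ((X : F[X]) ^ n - 1) - r %ₘ ((X : F[X]) ^ n - 1) := by
    rw [sub_eq_add_neg, add_modByMonic, hneg, ← sub_eq_add_neg]
  rw [h2] at h1
  rw [← h3]
  linear_combination h1

lemma qc_mod_congr {n : ℕ} (hn : 0 < n) {p q : F[X]}
    (h : ((X : F[X]) ^ n - 1) ∣ p - q) :
    p %ₘ ((X : F[X]) ^ n - 1) = q %ₘ ((X : F[X]) ^ n - 1) := by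
  apply qc_mod_eq_of hn
  · have h2 := qc_sub_mod_dvd hn q
    have e : p - q %ₘ ((X : F[X]) ^ n - 1)
        = (p - q) + (q - q %ₘ ((X : F[X]) ^ n - 1)) := by ring
    rw [e]; exact dvd_add h h2
  · exact qc_mod_degree_lt hn q

lemma vecOf_apply {n : ℕ} (p : F[X]) (i : Fin n) :
    vecOf n p i = (p %ₘ ((X : F[X]) ^ n - 1)).coeff i := rfl

lemma qc_vecOf_congr {n : ℕ} (hn : 0 < n) {p q : F[X]}
    (h : ((X : F[X]) ^ n - 1) ∣ p - q) : vecOf n p = vecOf n q := by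
  funext i
  rw [vecOf_apply, vecOf_apply, qc_mod_congr hn h]

lemma qc_dvd_mul_sub_mul {d x x' y y' : F[X]} (h1 : d ∣ x - x') (h2 : d ∣ y - y') :
    d ∣ x * y - x' * y' := by
  have e : x * y - x' * y' = (x - x') * y + x' * (y - y') := by ring
  rw [e]; exact dvd_add (h1.mul_right _) (h2.mul_left _)

lemma qc_reflect_reflect (N : ℕ) (f : F[X]) : reflect N (reflect N f) = f := by
  ext i; simp

lemma qc_natDegree_reflect_le {N : ℕ} {f : F[X]} (h : f.natDegree ≤ N) :
    (reflect N f).natDegree ≤ N := by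
  apply natDegree_le_iff_coeff_eq_zero.mpr
  intro m hm
  rw [coeff_reflect, revAt_eq_self_of_lt hm]
  exact coeff_eq_zero_of_natDegree_lt (lt_of_le_of_lt h hm)

lemma qc_reflect_one (N : ℕ) : reflect N (1 : F[X]) = X ^ N := by
  simpa using reflect_monomial N 0 (R := F)

lemma qc_reflect_shift {N : ℕ} {f : F[X]} (h : f.natDegree ≤ N) (m : ℕ) :
    reflect (N + m) f = reflect N f * X ^ m := by
  calc reflect (N + m) f = reflect (N + m) (f * 1) := by rw [mul_one]
    _ = reflect N f * reflect m 1 := reflect_mul f 1 h (by simp)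
    _ = reflect N f * X ^ m := by rw [qc_reflect_one]

lemma qcM_reflect {n : ℕ} : reflect n ((X : F[X]) ^ n - 1) = -((X : F[X]) ^ n - 1) := by
  rw [reflect_sub, reflect_monomial, revAt_le le_rfl, Nat.sub_self, pow_zero]
  have : reflect n (1 : F[X]) = X ^ n := qc_reflect_one n
  rw [this]; ring

lemma qc_reflect_mod_congr {n : ℕ} (hn : 0 < n) {P : F[X]} (hP : P.natDegree ≤ n + n) :
    ((X : F[X]) ^ n - 1) ∣
      reflect n (P %ₘ ((X : F[X]) ^ n - 1)) - reflect (n + n) P := by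
  have hdec : P %ₘ ((X : F[X]) ^ n - 1) + ((X : F[X]) ^ n - 1) * (P /ₘ ((X : F[X]) ^ n - 1)) = P :=
    modByMonic_add_div P ((X : F[X]) ^ n - 1)
  have hQ : (P /ₘ ((X : F[X]) ^ n - 1)).natDegree ≤ n := by
    rw [natDegree_divByMonic P (qcM_monic hn), qcM_natDegree]; omega
  have hR : (P %ₘ ((X : F[X]) ^ n - 1)).natDegree ≤ n := le_of_lt (qc_mod_natDegree_lt hn P)
  have h2n : reflect (n + n) P
      = reflect n (P %ₘ ((X : F[X]) ^ n - 1)) * X ^ n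
        + (-((X : F[X]) ^ n - 1)) * reflect n (P /ₘ ((X : F[X]) ^ n - 1)) := by
    conv_lhs => rw [← hdec]
    rw [reflect_add, reflect_mul _ _ (le_of_eq qcM_natDegree) hQ, qc_reflect_shift hR n,
      qcM_reflect]
  rw [h2n]
  have e : reflect n (P %ₘ ((X : F[X]) ^ n - 1))
      - (reflect n (P %ₘ ((X : F[X]) ^ n - 1)) * X ^ n
        + (-((X : F[X]) ^ n - 1)) * reflect n (P /ₘ ((X : F[X]) ^ n - 1)))
      = (-(reflect n (P %ₘ ((X : F[X]) ^ n - 1)))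
          + reflect n (P /ₘ ((X : F[X]) ^ n - 1))) * ((X : F[X]) ^ n - 1) := by ring
  rw [e]
  exact dvd_mul_left _ _

lemma qc_core {n : ℕ} (hn : 0 < n) (w₁ w₂ R₁ R₂ : F[X])
    (h₁ : R₁.natDegree ≤ n) (h₂ : R₂.natDegree ≤ n)
    (hc₁ : R₁.coeff 0 = 0) (hc₂ : R₂.coeff 0 = 0) :
    ((w₁ %ₘ ((X : F[X]) ^ n - 1)) * R₁ + (w₂ %ₘ ((X : F[X]) ^ n - 1)) * R₂).coeff n
      = ((w₁ * R₁ + w₂ * R₂) %ₘ ((X : F[X]) ^ n - 1)).coeff 0 := by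
  set U : F[X] := (w₁ %ₘ ((X : F[X]) ^ n - 1)) * R₁ + (w₂ %ₘ ((X : F[X]) ^ n - 1)) * R₂ with hU
  have hcong : ((X : F[X]) ^ n - 1) ∣ (w₁ * R₁ + w₂ * R₂) - U := by
    have e : (w₁ * R₁ + w₂ * R₂) - U
        = (w₁ - w₁ %ₘ ((X : F[X]) ^ n - 1)) * R₁ + (w₂ - w₂ %ₘ ((X : F[X]) ^ n - 1)) * R₂ := by
      rw [hU]; ring
    rw [e]
    exact dvd_add ((qc_sub_mod_dvd hn w₁).mul_right _) ((qc_sub_mod_dvd hn w₂).mul_right _)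
  have hmodeq : (w₁ * R₁ + w₂ * R₂) %ₘ ((X : F[X]) ^ n - 1) = U %ₘ ((X : F[X]) ^ n - 1) :=
    qc_mod_congr hn hcong
  have hdec : U %ₘ ((X : F[X]) ^ n - 1) + ((X : F[X]) ^ n - 1) * (U /ₘ ((X : F[X]) ^ n - 1)) = U :=
    modByMonic_add_div U ((X : F[X]) ^ n - 1)
  have hm1 : (w₁ %ₘ ((X : F[X]) ^ n - 1)).natDegree < n := qc_mod_natDegree_lt hn w₁
  have hm2 : (w₂ %ₘ ((X : F[X]) ^ n - 1)).natDegree < n := qc_mod_natDegree_lt hn w₂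
  have hUdeg : U.natDegree ≤ n + n - 1 := by
    apply le_trans (natDegree_add_le _ _)
    apply max_le
    · exact le_trans natDegree_mul_le (by omega)
    · exact le_trans natDegree_mul_le (by omega)
  have hQdeg : (U /ₘ ((X : F[X]) ^ n - 1)).natDegree < n := by
    have h5 := natDegree_divByMonic U (qcM_monic hn)
    rw [qcM_natDegree] at h5
    omega
  have hQn : (U /ₘ ((X : F[X]) ^ n - 1)).coeff n = 0 := coeff_eq_zero_of_natDegree_lt hQdeg
  have hSn : (U %ₘ ((X : F[X]) ^ n - 1)).coeff n = 0 := qc_mod_coeff hn U le_rfl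
  have hMQn : (((X : F[X]) ^ n - 1) * (U /ₘ ((X : F[X]) ^ n - 1))).coeff n
      = (U /ₘ ((X : F[X]) ^ n - 1)).coeff 0 := by
    rw [sub_mul, coeff_sub, one_mul]
    have h6 : ((X : F[X]) ^ n * (U /ₘ ((X : F[X]) ^ n - 1))).coeff n
        = (U /ₘ ((X : F[X]) ^ n - 1)).coeff 0 := by
      simpa using coeff_X_pow_mul (U /ₘ ((X : F[X]) ^ n - 1)) n 0
    rw [h6, hQn, sub_zero]
  have hMQ0 : (((X : F[X]) ^ n - 1) * (U /ₘ ((X : F[X]) ^ n - 1))).coeff 0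
      = -(U /ₘ ((X : F[X]) ^ n - 1)).coeff 0 := by
    rw [sub_mul, coeff_sub, one_mul, coeff_X_pow_mul' (U /ₘ ((X : F[X]) ^ n - 1)) n 0,
      if_neg (by omega)]
    ring
  have hU0 : U.coeff 0 = 0 := by
    rw [hU, coeff_add, mul_coeff_zero, mul_coeff_zero, hc₁, hc₂, mul_zero, mul_zero, add_zero]
  have hUn : U.coeff n = (U /ₘ ((X : F[X]) ^ n - 1)).coeff 0 := by
    conv_lhs => rw [← hdec]
    rw [coeff_add, hSn, hMQn, zero_add]
  have hS0 : (U %ₘ ((X : F[X]) ^ n - 1)).coeff 0 = (U /ₘ ((X : F[X]) ^ n - 1)).coeff 0 := by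
    have h7 : U.coeff 0 = (U %ₘ ((X : F[X]) ^ n - 1)).coeff 0
        + (((X : F[X]) ^ n - 1) * (U /ₘ ((X : F[X]) ^ n - 1))).coeff 0 := by
      conv_lhs => rw [← hdec]
      rw [coeff_add]
    rw [hMQ0] at h7
    linear_combination hU0 - h7
  rw [hmodeq, hS0]
  exact hUn

lemma qc_bez {n : ℕ} (hn : 0 < n) (W : F[X])
    (h : ∀ a : F[X], ((a * W) %ₘ ((X : F[X]) ^ n - 1)).coeff 0 = 0) :
    ((X : F[X]) ^ n - 1) ∣ W := by
  set G := EuclideanDomain.gcd ((X : F[X]) ^ n - 1) W with hGdef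
  have hGM : G ∣ ((X : F[X]) ^ n - 1) := EuclideanDomain.gcd_dvd_left _ _
  have hGW : G ∣ W := EuclideanDomain.gcd_dvd_right _ _
  have hbez : G = ((X : F[X]) ^ n - 1) * EuclideanDomain.gcdA ((X : F[X]) ^ n - 1) W
      + W * EuclideanDomain.gcdB ((X : F[X]) ^ n - 1) W :=
    EuclideanDomain.gcd_eq_gcd_ab _ _
  have hGmod : G %ₘ ((X : F[X]) ^ n - 1)
      = (EuclideanDomain.gcdB ((X : F[X]) ^ n - 1) W * W) %ₘ ((X : F[X]) ^ n - 1) := by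
    apply qc_mod_congr hn
    refine ⟨EuclideanDomain.gcdA ((X : F[X]) ^ n - 1) W, ?_⟩
    rw [hbez]; ring
  have hG0 : (G %ₘ ((X : F[X]) ^ n - 1)).coeff 0 = 0 := by rw [hGmod]; exact h _
  have hMne : ((X : F[X]) ^ n - 1) ≠ 0 := (qcM_monic hn).ne_zero
  have hdegG : G.degree ≤ (n : WithBot ℕ) := by
    have := degree_le_of_dvd hGM hMne
    rwa [qcM_degree hn] at this
  by_cases hcase : G.degree < (n : WithBot ℕ)
  · exfalso
    have hGmodself : G %ₘ ((X : F[X]) ^ n - 1) = G :=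
      (modByMonic_eq_self_iff (qcM_monic hn)).mpr (by rw [qcM_degree hn]; exact hcase)
    have hXG : X ∣ G := X_dvd_iff.mpr (by rw [← hGmodself]; exact hG0)
    have hXM : (X : F[X]) ∣ ((X : F[X]) ^ n - 1) := hXG.trans hGM
    have hM0 : ((X : F[X]) ^ n - 1).coeff 0 = 0 := X_dvd_iff.mp hXM
    rw [coeff_sub, coeff_X_pow, if_neg (by omega), coeff_one] at hM0
    simp at hM0
  · obtain ⟨c, hc⟩ := hGM
    have hGne : G ≠ 0 := by
      intro h0
      rw [h0, zero_mul] at hc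
      exact hMne hc
    have hcne : c ≠ 0 := by
      intro h0
      rw [h0, mul_zero] at hc
      exact hMne hc
    have hdG : G.degree = (n : WithBot ℕ) := le_antisymm hdegG (not_lt.mp hcase)
    have hdGnat : G.natDegree = n := natDegree_eq_of_degree_eq_some hdG
    have hdc : c.natDegree = 0 := by
      have := natDegree_mul hGne hcne
      rw [← hc, qcM_natDegree, hdGnat] at this
      omega
    obtain ⟨a, ha⟩ : ∃ a : F, c = C a := ⟨c.coeff 0, eq_C_of_natDegree_eq_zero hdc⟩
    have hane : a ≠ 0 := by
      rintro rfl
      rw [map_zero] at ha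
      exact hcne ha
    have hMG : ((X : F[X]) ^ n - 1) ∣ G := by
      refine ⟨C a⁻¹, ?_⟩
      rw [hc, ha, mul_assoc, ← map_mul, mul_inv_cancel₀ hane, map_one, mul_one]
    exact hMG.trans hGW

lemma qc_eInn_eq {n : ℕ} (hn : 0 < n) (u v : F[X]) :
    eInn (vecOf n u) (vecOf n v)
      = ((v %ₘ ((X : F[X]) ^ n - 1)) * reflect n (u %ₘ ((X : F[X]) ^ n - 1))).coeff n := by
  rw [coeff_mul, Finset.Nat.sum_antidiagonal_eq_sum_range_succ_mk]
  dsimp only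
  rw [Finset.sum_range_succ]
  have hvn : (v %ₘ ((X : F[X]) ^ n - 1)).coeff n = 0 := qc_mod_coeff hn v le_rfl
  rw [hvn, zero_mul, add_zero]
  unfold eInn
  simp only [vecOf_apply]
  rw [Fin.sum_univ_eq_sum_range
    (fun k => (u %ₘ ((X : F[X]) ^ n - 1)).coeff k * (v %ₘ ((X : F[X]) ^ n - 1)).coeff k) n]
  apply Finset.sum_congr rfl
  intro k hk
  have hk' : k < n := Finset.mem_range.mp hk
  rw [coeff_reflect, revAt_le (by omega : n - k ≤ n)]
  have h8 : n - (n - k) = k := by omega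
  rw [h8, mul_comm]

lemma qc_eInn2_eq {n : ℕ} (hn : 0 < n) (Cp Dp Y₁ Y₂ : F[X]) :
    eInn2 ((vecOf n Cp, vecOf n Dp) : (Fin n → F) × (Fin n → F)) (vecOf n Y₁, vecOf n Y₂)
      = ((Y₁ * reflect n (Cp %ₘ ((X : F[X]) ^ n - 1))
          + Y₂ * reflect n (Dp %ₘ ((X : F[X]) ^ n - 1))) %ₘ ((X : F[X]) ^ n - 1)).coeff 0 := by
  have e1 := qc_eInn_eq hn Cp Y₁
  have e2 := qc_eInn_eq hn Dp Y₂
  show eInn (vecOf n Cp) (vecOf n Y₁) + eInn (vecOf n Dp) (vecOf n Y₂) = _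
  rw [e1, e2, ← coeff_add]
  apply qc_core hn Y₁ Y₂ _ _
    (qc_natDegree_reflect_le (le_of_lt (qc_mod_natDegree_lt hn Cp)))
    (qc_natDegree_reflect_le (le_of_lt (qc_mod_natDegree_lt hn Dp)))
  · rw [coeff_reflect, revAt_zero]
    exact qc_mod_coeff hn Cp le_rfl
  · rw [coeff_reflect, revAt_zero]
    exact qc_mod_coeff hn Dp le_rfl

def qcPoly {n : ℕ} (c : Fin n → F) : F[X] := ∑ i : Fin n, C (c i) * X ^ (i : ℕ)

lemma qcPoly_degree {n : ℕ} (c : Fin n → F) : (qcPoly c).degree < (n : WithBot ℕ) := by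
  apply lt_of_le_of_lt (degree_sum_le _ _)
  refine (Finset.sup_lt_iff (WithBot.bot_lt_coe n)).mpr ?_
  intro i _
  exact lt_of_le_of_lt (degree_C_mul_X_pow_le _ _) (WithBot.coe_lt_coe.mpr i.isLt)

lemma qcPoly_coeff {n : ℕ} (c : Fin n → F) (i : Fin n) : (qcPoly c).coeff i = c i := by
  rw [qcPoly, finset_sum_coeff]
  rw [Finset.sum_eq_single i]
  · rw [coeff_C_mul, coeff_X_pow, if_pos rfl, mul_one]
  · intro j _ hj
    rw [coeff_C_mul, coeff_X_pow, if_neg (fun hh => hj (Fin.ext hh.symm)), mul_zero]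
  · intro hi
    exact absurd (Finset.mem_univ i) hi

lemma vecOf_qcPoly {n : ℕ} (hn : 0 < n) (c : Fin n → F) : vecOf n (qcPoly c) = c := by
  funext i
  rw [vecOf_apply,
    (modByMonic_eq_self_iff (qcM_monic hn)).mpr (by rw [qcM_degree hn]; exact qcPoly_degree c),
    qcPoly_coeff]

lemma qc_mul_div {n : ℕ} (hn : 0 < n) {f : F[X]} (hf : f.Monic)
    (hdvd : f ∣ (X : F[X]) ^ n - 1) :
    f * (((X : F[X]) ^ n - 1) /ₘ f) = (X : F[X]) ^ n - 1 := by
  have h0 : ((X : F[X]) ^ n - 1) %ₘ f = 0 := (modByMonic_eq_zero_iff_dvd hf).mpr hdvd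
  have h1 := modByMonic_add_div ((X : F[X]) ^ n - 1) f
  rw [h0, zero_add] at h1
  exact h1

lemma qc_divq_monic {n : ℕ} (hn : 0 < n) {f : F[X]} (hf : f.Monic)
    (hdvd : f ∣ (X : F[X]) ^ n - 1) : (((X : F[X]) ^ n - 1) /ₘ f).Monic :=
  hf.of_mul_monic_left (by rw [qc_mul_div hn hf hdvd]; exact qcM_monic hn)

lemma qc_deg_add {n : ℕ} (hn : 0 < n) {f : F[X]} (hf : f.Monic)
    (hdvd : f ∣ (X : F[X]) ^ n - 1) :
    f.natDegree + (((X : F[X]) ^ n - 1) /ₘ f).natDegree = n := by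
  rw [← natDegree_mul hf.ne_zero (qc_divq_monic hn hf hdvd).ne_zero, qc_mul_div hn hf hdvd,
    qcM_natDegree]

lemma qc_perp_eq {n : ℕ} (f : F[X]) :
    perpPoly n f = reflect ((((X : F[X]) ^ n - 1) /ₘ f).natDegree) (((X : F[X]) ^ n - 1) /ₘ f) :=
  rfl

lemma qc_perp_natDegree_le {n : ℕ} (hn : 0 < n) {f : F[X]} (hf : f.Monic)
    (hdvd : f ∣ (X : F[X]) ^ n - 1) : (perpPoly n f).natDegree ≤ n := by
  rw [qc_perp_eq]
  have h1 := qc_deg_add hn hf hdvd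
  exact le_trans (qc_natDegree_reflect_le le_rfl) (by omega)

lemma qc_reflect_perp {n : ℕ} (hn : 0 < n) {f : F[X]} (hf : f.Monic)
    (hdvd : f ∣ (X : F[X]) ^ n - 1) :
    reflect n (perpPoly n f) = (((X : F[X]) ^ n - 1) /ₘ f) * X ^ f.natDegree := by
  have hd := qc_deg_add hn hf hdvd
  have h1 : (reflect ((((X : F[X]) ^ n - 1) /ₘ f).natDegree) (((X : F[X]) ^ n - 1) /ₘ f)).natDegree
      ≤ (((X : F[X]) ^ n - 1) /ₘ f).natDegree := qc_natDegree_reflect_le le_rfl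
  calc reflect n (perpPoly n f)
      = reflect ((((X : F[X]) ^ n - 1) /ₘ f).natDegree + f.natDegree)
          (reflect ((((X : F[X]) ^ n - 1) /ₘ f).natDegree) (((X : F[X]) ^ n - 1) /ₘ f)) := by
        rw [qc_perp_eq]
        congr 1
        omega
    _ = reflect ((((X : F[X]) ^ n - 1) /ₘ f).natDegree)
          (reflect ((((X : F[X]) ^ n - 1) /ₘ f).natDegree) (((X : F[X]) ^ n - 1) /ₘ f))
            * X ^ f.natDegree := qc_reflect_shift h1 _
    _ = (((X : F[X]) ^ n - 1) /ₘ f) * X ^ f.natDegree := by rw [qc_reflect_reflect]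

lemma qc_K1 {n : ℕ} (hn : 0 < n) {f : F[X]} (hf : f.Monic)
    (hdvd : f ∣ (X : F[X]) ^ n - 1) :
    ((X : F[X]) ^ n - 1) ∣ f * reflect n (perpPoly n f) := by
  rw [qc_reflect_perp hn hf hdvd]
  exact ⟨X ^ f.natDegree, by rw [← mul_assoc, qc_mul_div hn hf hdvd]⟩

lemma barPoly_eq_reflect {n : ℕ} {f : F[X]} (h : f.natDegree ≤ n) :
    barPoly n f = reflect n f := by
  ext m
  rw [barPoly, finset_sum_coeff, coeff_reflect]
  by_cases hm : m ≤ n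
  · rw [revAt_le hm]
    have hterm : ∀ i ∈ f.support,
        (C (f.coeff i) * X ^ (n - i)).coeff m = if i = n - m then f.coeff i else 0 := by
      intro i hi
      have hin : i ≤ n := le_trans (le_natDegree_of_mem_supp i hi) h
      rw [coeff_C_mul, coeff_X_pow]
      by_cases he : i = n - m
      · rw [if_pos he, if_pos (by omega), mul_one]
      · rw [if_neg (by omega), if_neg he, mul_zero]
    rw [Finset.sum_congr rfl hterm, Finset.sum_ite_eq' f.support (n - m) (fun i => f.coeff i)]
    by_cases hs : n - m ∈ f.support
    · rw [if_pos hs]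
    · rw [if_neg hs]
      exact (notMem_support_iff.mp hs).symm
  · push_neg at hm
    rw [revAt_eq_self_of_lt hm]
    have h0 : f.coeff m = 0 := coeff_eq_zero_of_natDegree_lt (by omega)
    rw [h0]
    apply Finset.sum_eq_zero
    intro i hi
    have hin : i ≤ n := le_trans (le_natDegree_of_mem_supp i hi) h
    rw [coeff_C_mul, coeff_X_pow, if_neg (by omega), mul_zero]

lemma qc_eDual (n : ℕ) (hn : 0 < n) (f g h : F[X])
    (hf : f.Monic) (hg : g.Monic) (hhd : h.degree < (n : WithBot ℕ))
    (hfdvd : f ∣ (X : F[X]) ^ n - 1) (hgdvd : g ∣ (X : F[X]) ^ n - 1) :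
    eDualSet ((QCcode n f g h : Submodule F ((Fin n → F) × (Fin n → F))) :
        Set ((Fin n → F) × (Fin n → F))) =
      QCspan n (-(barPoly n h) * perpPoly n g) (perpPoly n g) (perpPoly n f) 0 := by
  have hhdeg : h.natDegree ≤ n := natDegree_le_iff_degree_le.mpr (le_of_lt hhd)
  have hbar : barPoly n h = reflect n h := barPoly_eq_reflect hhdeg
  have hpfdeg : (perpPoly n f).natDegree ≤ n := qc_perp_natDegree_le hn hf hfdvd
  have hpgdeg : (perpPoly n g).natDegree ≤ n := qc_perp_natDegree_le hn hg hgdvd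
  have hK1f : ((X : F[X]) ^ n - 1) ∣ f * reflect n (perpPoly n f) := qc_K1 hn hf hfdvd
  have hK1g : ((X : F[X]) ^ n - 1) ∣ g * reflect n (perpPoly n g) := qc_K1 hn hg hgdvd
  ext x
  constructor
  · intro hx
    obtain ⟨c, d⟩ := x
    have hvc : vecOf n (qcPoly c) = c := vecOf_qcPoly hn c
    have hvd : vecOf n (qcPoly d) = d := vecOf_qcPoly hn d
    have hCmod : qcPoly c %ₘ ((X : F[X]) ^ n - 1) = qcPoly c :=
      (modByMonic_eq_self_iff (qcM_monic hn)).mpr (by rw [qcM_degree hn]; exact qcPoly_degree c)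
    have hDmod : qcPoly d %ₘ ((X : F[X]) ^ n - 1) = qcPoly d :=
      (modByMonic_eq_self_iff (qcM_monic hn)).mpr (by rw [qcM_degree hn]; exact qcPoly_degree d)
    have key : ∀ Y₁ Y₂ : F[X],
        (∃ a b : F[X], ((vecOf n Y₁ : Fin n → F), (vecOf n Y₂ : Fin n → F))
          = (vecOf n (a * f), vecOf n (a * h * f + b * g))) →
        ((Y₁ * reflect n (qcPoly c) + Y₂ * reflect n (qcPoly d)) %ₘ ((X : F[X]) ^ n - 1)).coeff 0 = 0 := by
      intro Y₁ Y₂ hy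
      have h9 : eInn2 (c, d) ((vecOf n Y₁ : Fin n → F), (vecOf n Y₂ : Fin n → F)) = 0 :=
        hx (vecOf n Y₁, vecOf n Y₂) hy
      rw [← hvc, ← hvd, qc_eInn2_eq hn, hCmod, hDmod] at h9
      exact h9
    have hW2 : ((X : F[X]) ^ n - 1) ∣ g * reflect n (qcPoly d) := by
      apply qc_bez hn
      intro a
      have h9 := key (0 * f) (0 * h * f + a * g) ⟨0, a, rfl⟩
      have e : (0 * f) * reflect n (qcPoly c) + (0 * h * f + a * g) * reflect n (qcPoly d) = a * (g * reflect n (qcPoly d)) := by ring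
      rwa [e] at h9
    have hW1 : ((X : F[X]) ^ n - 1) ∣ f * reflect n (qcPoly c) + h * f * reflect n (qcPoly d) := by
      apply qc_bez hn
      intro a
      have h9 := key (a * f) (a * h * f + 0 * g) ⟨a, 0, rfl⟩
      have e : (a * f) * reflect n (qcPoly c) + (a * h * f + 0 * g) * reflect n (qcPoly d)
          = a * (f * reflect n (qcPoly c) + h * f * reflect n (qcPoly d)) := by ring
      rwa [e] at h9
    have hgM := qc_mul_div hn hg hgdvd
    have hfM := qc_mul_div hn hf hfdvd
    have hG'm := qc_divq_monic hn hg hgdvd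
    have hF'm := qc_divq_monic hn hf hfdvd
    have hdg := qc_deg_add hn hg hgdvd
    have hdf := qc_deg_add hn hf hfdvd
    obtain ⟨k, hk⟩ : (((X : F[X]) ^ n - 1) /ₘ g) ∣ reflect n (qcPoly d) := by
      obtain ⟨k, hk⟩ := hW2
      refine ⟨k, mul_left_cancel₀ hg.ne_zero ?_⟩
      rw [hk]
      linear_combination (-k) * hgM
    have hRDdeg : (reflect n (qcPoly d)).natDegree ≤ n :=
      qc_natDegree_reflect_le (natDegree_le_iff_degree_le.mpr (le_of_lt (qcPoly_degree d)))
    have hRCdeg : (reflect n (qcPoly c)).natDegree ≤ n :=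
      qc_natDegree_reflect_le (natDegree_le_iff_degree_le.mpr (le_of_lt (qcPoly_degree c)))
    have hkdeg : k.natDegree ≤ n - (((X : F[X]) ^ n - 1) /ₘ g).natDegree := by
      by_cases hk0 : k = 0
      · simp [hk0]
      · have h10 := natDegree_mul hG'm.ne_zero hk0
        rw [← hk] at h10
        omega
    have hDval : qcPoly d = reflect (n - (((X : F[X]) ^ n - 1) /ₘ g).natDegree) k * perpPoly n g := by
      have hsplit : (((X : F[X]) ^ n - 1) /ₘ g).natDegree + (n - (((X : F[X]) ^ n - 1) /ₘ g).natDegree) = n := by omega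
      calc qcPoly d = reflect n (reflect n (qcPoly d)) := (qc_reflect_reflect n (qcPoly d)).symm
        _ = reflect n ((((X : F[X]) ^ n - 1) /ₘ g) * k) := by rw [hk]
        _ = reflect ((((X : F[X]) ^ n - 1) /ₘ g).natDegree + (n - (((X : F[X]) ^ n - 1) /ₘ g).natDegree)) ((((X : F[X]) ^ n - 1) /ₘ g) * k) := by rw [hsplit]
        _ = reflect ((((X : F[X]) ^ n - 1) /ₘ g).natDegree) (((X : F[X]) ^ n - 1) /ₘ g) * reflect (n - (((X : F[X]) ^ n - 1) /ₘ g).natDegree) k := reflect_mul _ _ le_rfl hkdeg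
        _ = reflect (n - (((X : F[X]) ^ n - 1) /ₘ g).natDegree) k * perpPoly n g := by rw [← qc_perp_eq]; ring
    obtain ⟨w, hw⟩ : (((X : F[X]) ^ n - 1) /ₘ f) ∣ (reflect n (qcPoly c) + h * reflect n (qcPoly d)) := by
      obtain ⟨w, hw⟩ := hW1
      refine ⟨w, mul_left_cancel₀ hf.ne_zero ?_⟩
      calc f * (reflect n (qcPoly c) + h * reflect n (qcPoly d))
          = f * reflect n (qcPoly c) + h * f * reflect n (qcPoly d) := by ring
        _ = ((X : F[X]) ^ n - 1) * w := hw
        _ = f * ((((X : F[X]) ^ n - 1) /ₘ f) * w) := by linear_combination (-w) * hfM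
    have hwdeg : w.natDegree ≤ (n + n) - (((X : F[X]) ^ n - 1) /ₘ f).natDegree := by
      by_cases hw0 : w = 0
      · simp [hw0]
      · have hL : (reflect n (qcPoly c) + h * reflect n (qcPoly d)).natDegree ≤ n + n := by
          apply le_trans (natDegree_add_le _ _)
          apply max_le
          · omega
          · exact le_trans natDegree_mul_le (by omega)
        have h10 := natDegree_mul hF'm.ne_zero hw0
        rw [← hw] at h10
        omega
    have hre : reflect (n + n) (reflect n (qcPoly c) + h * reflect n (qcPoly d)) = reflect (n + n) ((((X : F[X]) ^ n - 1) /ₘ f) * w) := by rw [hw]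
    have h1 : reflect (n + n) (reflect n (qcPoly c) + h * reflect n (qcPoly d))
        = qcPoly c * X ^ n + reflect n h * qcPoly d := by
      rw [reflect_add, qc_reflect_shift hRCdeg n, qc_reflect_reflect,
        reflect_mul h _ hhdeg hRDdeg, qc_reflect_reflect]
    have h2 : reflect (n + n) ((((X : F[X]) ^ n - 1) /ₘ f) * w) = perpPoly n f * reflect ((n + n) - (((X : F[X]) ^ n - 1) /ₘ f).natDegree) w := by
      have hsplitf : (((X : F[X]) ^ n - 1) /ₘ f).natDegree + ((n + n) - (((X : F[X]) ^ n - 1) /ₘ f).natDegree) = n + n := by omega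
      calc reflect (n + n) ((((X : F[X]) ^ n - 1) /ₘ f) * w)
          = reflect ((((X : F[X]) ^ n - 1) /ₘ f).natDegree + ((n + n) - (((X : F[X]) ^ n - 1) /ₘ f).natDegree)) ((((X : F[X]) ^ n - 1) /ₘ f) * w) := by rw [hsplitf]
        _ = reflect ((((X : F[X]) ^ n - 1) /ₘ f).natDegree) (((X : F[X]) ^ n - 1) /ₘ f) * reflect ((n + n) - (((X : F[X]) ^ n - 1) /ₘ f).natDegree) w :=
            reflect_mul _ _ le_rfl hwdeg
        _ = perpPoly n f * reflect ((n + n) - (((X : F[X]) ^ n - 1) /ₘ f).natDegree) w := by rw [← qc_perp_eq]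
    rw [h1, h2] at hre
    refine ⟨reflect (n - (((X : F[X]) ^ n - 1) /ₘ g).natDegree) k, reflect ((n + n) - (((X : F[X]) ^ n - 1) /ₘ f).natDegree) w, ?_⟩
    have hCcong : ((X : F[X]) ^ n - 1) ∣ qcPoly c
        - (reflect (n - (((X : F[X]) ^ n - 1) /ₘ g).natDegree) k * (-(barPoly n h) * perpPoly n g) + reflect ((n + n) - (((X : F[X]) ^ n - 1) /ₘ f).natDegree) w * perpPoly n f) := by
      refine ⟨-(qcPoly c), ?_⟩
      rw [hbar]
      linear_combination hre - reflect n h * hDval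
    have hc' : c = vecOf n (reflect (n - (((X : F[X]) ^ n - 1) /ₘ g).natDegree) k * (-(barPoly n h) * perpPoly n g) + reflect ((n + n) - (((X : F[X]) ^ n - 1) /ₘ f).natDegree) w * perpPoly n f) := by
      rw [← hvc]; exact qc_vecOf_congr hn hCcong
    have hd' : d = vecOf n (reflect (n - (((X : F[X]) ^ n - 1) /ₘ g).natDegree) k * perpPoly n g + reflect ((n + n) - (((X : F[X]) ^ n - 1) /ₘ f).natDegree) w * 0) := by
      rw [← hvd]
      congr 1
      rw [hDval]; ring
    rw [hc', hd']
  · rintro ⟨a, b, rfl⟩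
    intro y hy
    obtain ⟨a', b', rfl⟩ := hy
    rw [qc_eInn2_eq hn]
    suffices hdvd9 : ((X : F[X]) ^ n - 1) ∣ (a' * f) * reflect n ((a * (-(barPoly n h) * perpPoly n g) + b * perpPoly n f) %ₘ ((X : F[X]) ^ n - 1))
        + (a' * h * f + b' * g) * reflect n ((a * perpPoly n g + b * 0) %ₘ ((X : F[X]) ^ n - 1)) by
      rw [(modByMonic_eq_zero_iff_dvd (qcM_monic hn)).mpr hdvd9, coeff_zero]
    have hu₁deg : ((-(barPoly n h) * perpPoly n g)).natDegree ≤ n + n := by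
      apply le_trans natDegree_mul_le
      have h9 : (-(barPoly n h)).natDegree ≤ n := by
        rw [natDegree_neg, hbar]; exact qc_natDegree_reflect_le hhdeg
      omega
    have hstep : ((X : F[X]) ^ n - 1) ∣ reflect n ((-(barPoly n h) * perpPoly n g) %ₘ ((X : F[X]) ^ n - 1)) - (-(h * reflect n (perpPoly n g))) := by
      have h1 := qc_reflect_mod_congr hn hu₁deg
      have h2 : reflect (n + n) (-(barPoly n h) * perpPoly n g) = -(h * reflect n (perpPoly n g)) := by
        have e : (-(barPoly n h) * perpPoly n g) = -(reflect n h * perpPoly n g) := by rw [hbar]; ring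
        rw [e, reflect_neg, reflect_mul _ _ (qc_natDegree_reflect_le hhdeg) hpgdeg,
          qc_reflect_reflect]
      rwa [h2] at h1
    have hC1 : ((X : F[X]) ^ n - 1) ∣ (a * (-(barPoly n h) * perpPoly n g) + b * perpPoly n f) - ((a %ₘ ((X : F[X]) ^ n - 1)) * ((-(barPoly n h) * perpPoly n g) %ₘ ((X : F[X]) ^ n - 1)) + (b %ₘ ((X : F[X]) ^ n - 1)) * perpPoly n f) := by
      have e : (a * (-(barPoly n h) * perpPoly n g) + b * perpPoly n f) - ((a %ₘ ((X : F[X]) ^ n - 1)) * ((-(barPoly n h) * perpPoly n g) %ₘ ((X : F[X]) ^ n - 1)) + (b %ₘ ((X : F[X]) ^ n - 1)) * perpPoly n f)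
          = (a * (-(barPoly n h) * perpPoly n g) - (a %ₘ ((X : F[X]) ^ n - 1)) * ((-(barPoly n h) * perpPoly n g) %ₘ ((X : F[X]) ^ n - 1))) + (b * perpPoly n f - (b %ₘ ((X : F[X]) ^ n - 1)) * perpPoly n f) := by ring
      rw [e]
      exact dvd_add (qc_dvd_mul_sub_mul (qc_sub_mod_dvd hn a) (qc_sub_mod_dvd hn (-(barPoly n h) * perpPoly n g)))
        (qc_dvd_mul_sub_mul (qc_sub_mod_dvd hn b) (by simp))
    have hCmodeq : (a * (-(barPoly n h) * perpPoly n g) + b * perpPoly n f) %ₘ ((X : F[X]) ^ n - 1) = ((a %ₘ ((X : F[X]) ^ n - 1)) * ((-(barPoly n h) * perpPoly n g) %ₘ ((X : F[X]) ^ n - 1)) + (b %ₘ ((X : F[X]) ^ n - 1)) * perpPoly n f) %ₘ ((X : F[X]) ^ n - 1) :=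
      qc_mod_congr hn hC1
    have hP₁deg : ((a %ₘ ((X : F[X]) ^ n - 1)) * ((-(barPoly n h) * perpPoly n g) %ₘ ((X : F[X]) ^ n - 1)) + (b %ₘ ((X : F[X]) ^ n - 1)) * perpPoly n f).natDegree ≤ n + n := by
      apply le_trans (natDegree_add_le _ _)
      apply max_le
      · apply le_trans natDegree_mul_le
        have := qc_mod_natDegree_lt hn a
        have := qc_mod_natDegree_lt hn (-(barPoly n h) * perpPoly n g)
        omega
      · apply le_trans natDegree_mul_le
        have := qc_mod_natDegree_lt hn b
        omega
    have hC2 := qc_reflect_mod_congr hn hP₁deg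
    have hC3 : reflect (n + n) ((a %ₘ ((X : F[X]) ^ n - 1)) * ((-(barPoly n h) * perpPoly n g) %ₘ ((X : F[X]) ^ n - 1)) + (b %ₘ ((X : F[X]) ^ n - 1)) * perpPoly n f)
        = reflect n (a %ₘ ((X : F[X]) ^ n - 1)) * reflect n ((-(barPoly n h) * perpPoly n g) %ₘ ((X : F[X]) ^ n - 1)) + reflect n (b %ₘ ((X : F[X]) ^ n - 1)) * reflect n (perpPoly n f) := by
      rw [reflect_add,
        reflect_mul _ _ (le_of_lt (qc_mod_natDegree_lt hn a)) (le_of_lt (qc_mod_natDegree_lt hn (-(barPoly n h) * perpPoly n g))),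
        reflect_mul _ _ (le_of_lt (qc_mod_natDegree_lt hn b)) hpfdeg]
    have hCfinal : ((X : F[X]) ^ n - 1) ∣ reflect n ((a * (-(barPoly n h) * perpPoly n g) + b * perpPoly n f) %ₘ ((X : F[X]) ^ n - 1))
        - (reflect n (a %ₘ ((X : F[X]) ^ n - 1)) * (-(h * reflect n (perpPoly n g))) + reflect n (b %ₘ ((X : F[X]) ^ n - 1)) * reflect n (perpPoly n f)) := by
      rw [hCmodeq]
      have t2 : ((X : F[X]) ^ n - 1) ∣ reflect (n + n) ((a %ₘ ((X : F[X]) ^ n - 1)) * ((-(barPoly n h) * perpPoly n g) %ₘ ((X : F[X]) ^ n - 1)) + (b %ₘ ((X : F[X]) ^ n - 1)) * perpPoly n f)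
          - (reflect n (a %ₘ ((X : F[X]) ^ n - 1)) * (-(h * reflect n (perpPoly n g))) + reflect n (b %ₘ ((X : F[X]) ^ n - 1)) * reflect n (perpPoly n f)) := by
        rw [hC3]
        have e : reflect n (a %ₘ ((X : F[X]) ^ n - 1)) * reflect n ((-(barPoly n h) * perpPoly n g) %ₘ ((X : F[X]) ^ n - 1)) + reflect n (b %ₘ ((X : F[X]) ^ n - 1)) * reflect n (perpPoly n f)
            - (reflect n (a %ₘ ((X : F[X]) ^ n - 1)) * (-(h * reflect n (perpPoly n g))) + reflect n (b %ₘ ((X : F[X]) ^ n - 1)) * reflect n (perpPoly n f))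
            = reflect n (a %ₘ ((X : F[X]) ^ n - 1)) * (reflect n ((-(barPoly n h) * perpPoly n g) %ₘ ((X : F[X]) ^ n - 1)) - (-(h * reflect n (perpPoly n g)))) := by ring
        rw [e]
        exact hstep.mul_left _
      have h11 := dvd_add hC2 t2
      rwa [sub_add_sub_cancel] at h11
    have hD1 : ((X : F[X]) ^ n - 1) ∣ (a * perpPoly n g + b * 0) - (a %ₘ ((X : F[X]) ^ n - 1)) * perpPoly n g := by
      have e : (a * perpPoly n g + b * 0) - (a %ₘ ((X : F[X]) ^ n - 1)) * perpPoly n g = (a - (a %ₘ ((X : F[X]) ^ n - 1))) * perpPoly n g := by ring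
      rw [e]
      exact (qc_sub_mod_dvd hn a).mul_right _
    have hDmodeq : (a * perpPoly n g + b * 0) %ₘ ((X : F[X]) ^ n - 1) = ((a %ₘ ((X : F[X]) ^ n - 1)) * perpPoly n g) %ₘ ((X : F[X]) ^ n - 1) := qc_mod_congr hn hD1
    have hDP1deg : ((a %ₘ ((X : F[X]) ^ n - 1)) * perpPoly n g).natDegree ≤ n + n := by
      apply le_trans natDegree_mul_le
      have := qc_mod_natDegree_lt hn a
      omega
    have hD2 := qc_reflect_mod_congr hn hDP1deg
    have hD3 : reflect (n + n) ((a %ₘ ((X : F[X]) ^ n - 1)) * perpPoly n g) = reflect n (a %ₘ ((X : F[X]) ^ n - 1)) * reflect n (perpPoly n g) :=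
      reflect_mul _ _ (le_of_lt (qc_mod_natDegree_lt hn a)) hpgdeg
    have hDfinal : ((X : F[X]) ^ n - 1) ∣ reflect n ((a * perpPoly n g + b * 0) %ₘ ((X : F[X]) ^ n - 1)) - reflect n (a %ₘ ((X : F[X]) ^ n - 1)) * reflect n (perpPoly n g) := by
      rw [hDmodeq]
      rwa [hD3] at hD2
    have hT' : ((X : F[X]) ^ n - 1) ∣ (a' * f) * (reflect n (a %ₘ ((X : F[X]) ^ n - 1)) * (-(h * reflect n (perpPoly n g))) + reflect n (b %ₘ ((X : F[X]) ^ n - 1)) * reflect n (perpPoly n f))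
        + (a' * h * f + b' * g) * (reflect n (a %ₘ ((X : F[X]) ^ n - 1)) * reflect n (perpPoly n g)) := by
      have e : (a' * f) * (reflect n (a %ₘ ((X : F[X]) ^ n - 1)) * (-(h * reflect n (perpPoly n g))) + reflect n (b %ₘ ((X : F[X]) ^ n - 1)) * reflect n (perpPoly n f))
          + (a' * h * f + b' * g) * (reflect n (a %ₘ ((X : F[X]) ^ n - 1)) * reflect n (perpPoly n g))
          = (a' * reflect n (b %ₘ ((X : F[X]) ^ n - 1))) * (f * reflect n (perpPoly n f)) + (b' * reflect n (a %ₘ ((X : F[X]) ^ n - 1))) * (g * reflect n (perpPoly n g)) := by ring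
      rw [e]
      exact dvd_add (hK1f.mul_left _) (hK1g.mul_left _)
    have hdiff : ((X : F[X]) ^ n - 1) ∣ ((a' * f) * reflect n ((a * (-(barPoly n h) * perpPoly n g) + b * perpPoly n f) %ₘ ((X : F[X]) ^ n - 1))
          + (a' * h * f + b' * g) * reflect n ((a * perpPoly n g + b * 0) %ₘ ((X : F[X]) ^ n - 1)))
        - ((a' * f) * (reflect n (a %ₘ ((X : F[X]) ^ n - 1)) * (-(h * reflect n (perpPoly n g))) + reflect n (b %ₘ ((X : F[X]) ^ n - 1)) * reflect n (perpPoly n f))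
          + (a' * h * f + b' * g) * (reflect n (a %ₘ ((X : F[X]) ^ n - 1)) * reflect n (perpPoly n g))) := by
      have e : ((a' * f) * reflect n ((a * (-(barPoly n h) * perpPoly n g) + b * perpPoly n f) %ₘ ((X : F[X]) ^ n - 1))
            + (a' * h * f + b' * g) * reflect n ((a * perpPoly n g + b * 0) %ₘ ((X : F[X]) ^ n - 1)))
          - ((a' * f) * (reflect n (a %ₘ ((X : F[X]) ^ n - 1)) * (-(h * reflect n (perpPoly n g))) + reflect n (b %ₘ ((X : F[X]) ^ n - 1)) * reflect n (perpPoly n f))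
            + (a' * h * f + b' * g) * (reflect n (a %ₘ ((X : F[X]) ^ n - 1)) * reflect n (perpPoly n g)))
          = (a' * f) * (reflect n ((a * (-(barPoly n h) * perpPoly n g) + b * perpPoly n f) %ₘ ((X : F[X]) ^ n - 1)) - (reflect n (a %ₘ ((X : F[X]) ^ n - 1)) * (-(h * reflect n (perpPoly n g))) + reflect n (b %ₘ ((X : F[X]) ^ n - 1)) * reflect n (perpPoly n f)))
            + (a' * h * f + b' * g) * (reflect n ((a * perpPoly n g + b * 0) %ₘ ((X : F[X]) ^ n - 1)) - reflect n (a %ₘ ((X : F[X]) ^ n - 1)) * reflect n (perpPoly n g)) := by ring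
      rw [e]
      exact dvd_add (hCfinal.mul_left _) (hDfinal.mul_left _)
    have h12 := dvd_add hdiff hT'
    rwa [sub_add_cancel] at h12

lemma qc_M_map {n : ℕ} (φ : F →+* F) :
    ((X : F[X]) ^ n - 1).map φ = (X : F[X]) ^ n - 1 := by
  simp [Polynomial.map_sub, Polynomial.map_pow, Polynomial.map_one]

lemma qc_vecOf_map {n : ℕ} (hn : 0 < n) (φ : F →+* F) (A : F[X]) :
    vecOf n (A.map φ) = fun i => φ (vecOf n A i) := by
  funext i
  rw [vecOf_apply, vecOf_apply, ← coeff_map]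
  congr 1
  conv_lhs => rw [← qc_M_map (n := n) φ]
  exact (map_modByMonic (p := A) φ (qcM_monic hn)).symm

lemma qc_reflect_map (φ : F →+* F) (N : ℕ) (f : F[X]) :
    (reflect N f).map φ = reflect N (f.map φ) := by
  ext i
  simp [coeff_map, coeff_reflect]

lemma qc_reverse_map (φ : F →+* F) (f : F[X]) :
    (f.reverse).map φ = (f.map φ).reverse := by
  rw [reverse, reverse, qc_reflect_map, natDegree_map_eq_of_injective φ.injective]

lemma qc_perp_map {n : ℕ} (φ : F →+* F) {f : F[X]} (hf : f.Monic) :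
    (perpPoly n f).map φ = perpPoly n (f.map φ) := by
  show ((((X : F[X]) ^ n - 1) /ₘ f).reverse).map φ = (((X : F[X]) ^ n - 1) /ₘ f.map φ).reverse
  rw [qc_reverse_map, map_divByMonic φ hf, qc_M_map]

lemma qc_polyQ_eq_map {q : ℕ} (hq0 : q ≠ 0) (φ : F →+* F) (hφ : ∀ x : F, φ x = x ^ q)
    (u : F[X]) : polyQ q u = u.map φ := by
  ext j
  rw [coeff_map, hφ, polyQ, finset_sum_coeff]
  have hterm : ∀ i ∈ u.support,
      (C (u.coeff i ^ q) * X ^ i).coeff j = if i = j then u.coeff i ^ q else 0 := by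
    intro i _
    rw [coeff_C_mul, coeff_X_pow]
    by_cases he : i = j
    · rw [if_pos he, if_pos he.symm, mul_one]
    · rw [if_neg (Ne.symm he), if_neg he, mul_zero]
  rw [Finset.sum_congr rfl hterm, Finset.sum_ite_eq' u.support j (fun i => u.coeff i ^ q)]
  by_cases hj : j ∈ u.support
  · rw [if_pos hj]
  · rw [if_neg hj, notMem_support_iff.mp hj, zero_pow hq0]

lemma qc_bar_map {n : ℕ} (φ : F →+* F) {h : F[X]} (hdeg : h.natDegree ≤ n) :
    (barPoly n h).map φ = barPoly n (h.map φ) := by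
  rw [barPoly_eq_reflect hdeg, barPoly_eq_reflect (le_trans natDegree_map_le hdeg),
    qc_reflect_map]

lemma qc_hDual_eq_image {n q : ℕ} (φ : F →+* F) (hφ : ∀ x : F, φ x = x ^ q)
    (hinv : ∀ x : F, φ (φ x) = x) (S : Set ((Fin n → F) × (Fin n → F))) :
    hDualSet q S
      = (fun v : (Fin n → F) × (Fin n → F) =>
          ((fun i => φ (v.1 i), fun i => φ (v.2 i)) : (Fin n → F) × (Fin n → F))) '' eDualSet S := by
  have hmem : ∀ z : (Fin n → F) × (Fin n → F),
      z ∈ hDualSet q S ↔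
        (((fun i => φ (z.1 i), fun i => φ (z.2 i)) : (Fin n → F) × (Fin n → F)) ∈ eDualSet S) := by
    intro z
    have hinn : ∀ y : (Fin n → F) × (Fin n → F),
        hInn2 q z y = eInn2 ((fun i => φ (z.1 i), fun i => φ (z.2 i)) :
          (Fin n → F) × (Fin n → F)) y := by
      intro y
      unfold hInn2 eInn2 eInn
      simp only [hφ]
    constructor
    · intro hz y hy
      rw [← hinn y]
      exact hz y hy
    · intro hz y hy
      rw [hinn y]
      exact hz y hy
  ext x
  constructor
  · intro hx
    refine ⟨(fun i => φ (x.1 i), fun i => φ (x.2 i)), (hmem x).mp hx, ?_⟩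
    ext i
    · exact hinv (x.1 i)
    · exact hinv (x.2 i)
  · rintro ⟨z, hz, rfl⟩
    apply (hmem _).mpr
    have h1 : ((fun i => φ (φ (z.1 i)), fun i => φ (φ (z.2 i))) :
        (Fin n → F) × (Fin n → F)) = z := by
      ext i
      · exact hinv (z.1 i)
      · exact hinv (z.2 i)
    convert hz using 1

lemma qc_image_QCspan {n : ℕ} (hn : 0 < n) (φ : F →+* F) (hinv : ∀ x : F, φ (φ x) = x)
    (u₁ v₁ u₂ v₂ : F[X]) :
    (fun v : (Fin n → F) × (Fin n → F) =>
        ((fun i => φ (v.1 i), fun i => φ (v.2 i)) : (Fin n → F) × (Fin n → F))) '' QCspan n u₁ v₁ u₂ v₂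
      = QCspan n (u₁.map φ) (v₁.map φ) (u₂.map φ) (v₂.map φ) := by
  have hcomp : ∀ A : F[X], (A.map φ).map φ = A := by
    intro A
    rw [Polynomial.map_map]
    have he : φ.comp φ = RingHom.id F := RingHom.ext hinv
    rw [he, map_id]
  have hpair : ∀ P Q : F[X],
      ((fun i => φ (vecOf n P i), fun i => φ (vecOf n Q i)) : (Fin n → F) × (Fin n → F))
        = (vecOf n (P.map φ), vecOf n (Q.map φ)) := by
    intro P Q
    rw [qc_vecOf_map hn φ P, qc_vecOf_map hn φ Q]
  ext x
  constructor
  · rintro ⟨w, ⟨a, b, rfl⟩, rfl⟩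
    refine ⟨a.map φ, b.map φ, ?_⟩
    dsimp only
    rw [hpair]
    rw [Polynomial.map_add, Polynomial.map_add, Polynomial.map_mul, Polynomial.map_mul,
      Polynomial.map_mul, Polynomial.map_mul]
  · rintro ⟨a, b, rfl⟩
    refine ⟨(vecOf n (a.map φ * u₁ + b.map φ * u₂), vecOf n (a.map φ * v₁ + b.map φ * v₂)),
      ⟨a.map φ, b.map φ, rfl⟩, ?_⟩
    dsimp only
    rw [hpair]
    rw [Polynomial.map_add, Polynomial.map_add, Polynomial.map_mul, Polynomial.map_mul,
      Polynomial.map_mul, Polynomial.map_mul, hcomp a, hcomp b]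

end QCAux

/-- the Hermitian dual of `Q_{q^2}(f,g,h)` is the QC code generated by
`([-bar(h^[q]) (g^[q])^⊥], [(g^[q])^⊥])` and `([(f^[q])^⊥], 0)`. -/
theorem stmt16 [Fintype F] (p r q n : ℕ) (hp : p.Prime) (hr : 0 < r) (hq : q = p ^ r)
    (hF : Fintype.card F = q ^ 2) (hn : 0 < n) (f g h : F[X])
    (hf : f.Monic) (hg : g.Monic) (hh : h.Monic)
    (hfd : f.degree < n) (hgd : g.degree < n) (hhd : h.degree < n)
    (hfdvd : f ∣ X ^ n - 1) (hgdvd : g ∣ X ^ n - 1) :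
    hDualSet q (QCcode n f g h : Set ((Fin n → F) × (Fin n → F))) =
      QCspan n (-(barPoly n (polyQ q h)) * perpPoly n (polyQ q g))
        (perpPoly n (polyQ q g)) (perpPoly n (polyQ q f)) 0 := by
  have hq0 : q ≠ 0 := by
    rw [hq]
    exact (pow_pos hp.pos r).ne'
  obtain ⟨p', hp'⟩ := CharP.exists F
  haveI := hp'
  obtain ⟨m, hp'prime, hcard'⟩ := FiniteField.card F p'
  have hpp' : p' = p := by
    have h3 : p' ∣ p' ^ (m : ℕ) := dvd_pow_self p' m.pos.ne'
    have h4 : p' ^ (m : ℕ) = p ^ (r * 2) := by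
      calc p' ^ (m : ℕ) = Fintype.card F := hcard'.symm
        _ = q ^ 2 := hF
        _ = p ^ (r * 2) := by rw [hq, ← pow_mul]
    have h5 : p' ∣ p := hp'prime.dvd_of_dvd_pow (h4 ▸ h3)
    exact (Nat.prime_dvd_prime_iff_eq hp'prime hp).mp h5
  haveI hPF : CharP F p := hpp' ▸ hp'
  haveI : ExpChar F p := ExpChar.prime hp
  have hφ : ∀ x : F, iterateFrobenius F p r x = x ^ q := by
    intro x
    rw [iterateFrobenius_def, hq]
  have hinv : ∀ x : F, iterateFrobenius F p r (iterateFrobenius F p r x) = x := by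
    intro x
    calc iterateFrobenius F p r (iterateFrobenius F p r x) = (x ^ q) ^ q := by rw [hφ, hφ]
      _ = x ^ (q * q) := by rw [← pow_mul]
      _ = x ^ Fintype.card F := by rw [hF, pow_two]
      _ = x := FiniteField.pow_card x
  have hhdeg : h.natDegree ≤ n := natDegree_le_iff_degree_le.mpr (le_of_lt hhd)
  rw [qc_hDual_eq_image (iterateFrobenius F p r) hφ hinv,
    qc_eDual n hn f g h hf hg hhd hfdvd hgdvd,
    qc_image_QCspan hn (iterateFrobenius F p r) hinv]
  rw [qc_polyQ_eq_map hq0 (iterateFrobenius F p r) hφ h,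
    qc_polyQ_eq_map hq0 (iterateFrobenius F p r) hφ g,
    qc_polyQ_eq_map hq0 (iterateFrobenius F p r) hφ f]
  have e1 : (-(barPoly n h) * perpPoly n g).map (iterateFrobenius F p r)
      = -(barPoly n (h.map (iterateFrobenius F p r)))
          * perpPoly n (g.map (iterateFrobenius F p r)) := by
    rw [Polynomial.map_mul, Polynomial.map_neg, qc_bar_map _ hhdeg, qc_perp_map _ hg]
  have e2 : (perpPoly n g).map (iterateFrobenius F p r)
      = perpPoly n (g.map (iterateFrobenius F p r)) := qc_perp_map _ hg
  have e3 : (perpPoly n f).map (iterateFrobenius F p r)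
      = perpPoly n (f.map (iterateFrobenius F p r)) := qc_perp_map _ hf
  rw [e1, e2, e3, Polynomial.map_zero]

end
end

section
/- If f(x) divides g(x), g(x) divides (g^{[q]})^perp(x), and (g^{[q]})^perp(x) divides (f^{[q]})^perp(x), then the Hermitian dual code Q_{q^2}(f,g,h)^{perp_h} is contained in Q_{q^2}(f,g,h). -/
open Polynomial Finset

noncomputable section

variable {F : Type*} [Field F] [DecidableEq F]

noncomputable section

namespace Stmt17Aux

variable {F : Type*} [Field F]

lemma monicM (n : ℕ) (hn : 0 < n) : (X ^ n - 1 : F[X]).Monic := by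
  simpa using monic_X_pow_sub_C (1 : F) hn.ne'

lemma degreeM (n : ℕ) (hn : 0 < n) : (X ^ n - 1 : F[X]).degree = n := by
  simpa using degree_X_pow_sub_C hn (1 : F)

lemma mod_eq_mod (n : ℕ) (hn : 0 < n) {u v : F[X]} (h : (X ^ n - 1 : F[X]) ∣ u - v) :
    u %ₘ (X ^ n - 1) = v %ₘ (X ^ n - 1) := by
  obtain ⟨k, hk⟩ := h
  have hu : u = v + (X ^ n - 1) * k := by linear_combination hk
  rw [hu, add_modByMonic, (modByMonic_eq_zero_iff_dvd (monicM n hn)).2 ⟨k, rfl⟩, add_zero]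

lemma coeff_sumXpow (n : ℕ) (c : ℕ → F) (m : ℕ) :
    (∑ i ∈ range n, C (c i) * X ^ i).coeff m = if m < n then c m else 0 := by
  simp only [finset_sum_coeff, coeff_C_mul, coeff_X_pow, mul_ite, mul_one, mul_zero,
    Finset.sum_ite_eq, mem_range]

lemma coeff_sumXpowRev (n : ℕ) (c : ℕ → F) (m : ℕ) :
    (∑ i ∈ range n, C (c i) * X ^ (n - i)).coeff m
      = if 1 ≤ m ∧ m ≤ n then c (n - m) else 0 := by
  simp only [finset_sum_coeff, coeff_C_mul, coeff_X_pow, mul_ite, mul_one, mul_zero]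
  by_cases h : 1 ≤ m ∧ m ≤ n
  · rw [if_pos h, Finset.sum_eq_single_of_mem (n - m) (mem_range.2 (by omega))]
    · rw [if_pos (by omega)]
    · intro i hi hne
      rw [mem_range] at hi
      rw [if_neg (by omega)]
  · rw [if_neg h]
    refine Finset.sum_eq_zero fun i hi => ?_
    rw [mem_range] at hi
    rw [if_neg (by omega)]

lemma coeff_modByMonic_of_lt (n : ℕ) (hn : 0 < n) (P : F[X]) (hP : P.natDegree < 2 * n)
    (i : ℕ) (hi : i < n) :
    (P %ₘ (X ^ n - 1)).coeff i = P.coeff i + P.coeff (n + i) := by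
  set H : F[X] := ∑ j ∈ range n, C (P.coeff (n + j)) * X ^ j with hH
  have hHc : ∀ m, H.coeff m = if m < n then P.coeff (n + m) else 0 := fun m =>
    coeff_sumXpow n _ m
  set R : F[X] := P - (X ^ n - 1) * H with hR
  have hRc : ∀ m, R.coeff m =
      P.coeff m - ((if n ≤ m then H.coeff (m - n) else 0) - H.coeff m) := by
    intro m
    rw [hR, coeff_sub, sub_mul, one_mul, coeff_sub, coeff_X_pow_mul']
  have hdeg : R.degree < ((X : F[X]) ^ n - 1).degree := by
    rw [degreeM n hn, degree_lt_iff_coeff_zero]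
    intro m hm
    have hm' : n ≤ m := by exact_mod_cast hm
    rw [hRc m, if_pos hm', hHc m, if_neg (by omega)]
    by_cases h2 : m < 2 * n
    · rw [hHc (m - n), if_pos (by omega), show n + (m - n) = m by omega]
      ring
    · rw [hHc (m - n), if_neg (by omega), coeff_eq_zero_of_natDegree_lt (by omega)]
      ring
  have hPR : P %ₘ (X ^ n - 1) = R := by
    have hsplit : P = (X ^ n - 1) * H + R := by rw [hR]; ring
    conv_lhs => rw [hsplit]
    rw [add_modByMonic, (modByMonic_eq_zero_iff_dvd (monicM n hn)).2 ⟨H, rfl⟩, zero_add,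
      (modByMonic_eq_self_iff (monicM n hn)).2 hdeg]
  rw [hPR, hRc i, if_neg (by omega), hHc i, if_pos hi]
  ring

lemma dvd_of_forall_phi (n : ℕ) (hn : 0 < n) (v : F[X])
    (hv : ∀ b : F[X], ((b * v) %ₘ (X ^ n - 1)).coeff 0 = 0) : (X ^ n - 1 : F[X]) ∣ v := by
  set w := v %ₘ (X ^ n - 1) with hw
  have hvw : v - w = (X ^ n - 1) * (v /ₘ (X ^ n - 1)) := by
    have := modByMonic_add_div v (X ^ n - 1)
    linear_combination -this
  have hwc : ∀ m, n ≤ m → w.coeff m = 0 := by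
    have hdg : w.degree < (n : ℕ) := by
      rw [← degreeM (F := F) n hn]
      exact degree_modByMonic_lt v (monicM n hn)
    intro m hm
    exact (degree_lt_iff_coeff_zero w n).1 hdg m (by exact_mod_cast hm)
  have hwnd : w.natDegree ≤ n - 1 :=
    natDegree_le_iff_coeff_eq_zero.2 fun N hN => hwc N (by omega)
  have hw0 : w = 0 := by
    ext i
    rw [coeff_zero]
    by_cases hi : i < n
    · have hb := hv (X ^ (n - i))
      have heq : (X ^ (n - i) * v) %ₘ (X ^ n - 1) = (X ^ (n - i) * w) %ₘ (X ^ n - 1) :=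
        mod_eq_mod n hn ⟨X ^ (n - i) * (v /ₘ (X ^ n - 1)), by rw [← mul_sub, hvw]; ring⟩
      rw [heq] at hb
      have hnd : (X ^ (n - i) * w).natDegree < 2 * n := by
        refine lt_of_le_of_lt (natDegree_mul_le) ?_
        rw [natDegree_X_pow]
        omega
      rw [coeff_modByMonic_of_lt n hn _ hnd 0 hn, coeff_X_pow_mul', coeff_X_pow_mul',
        if_neg (by omega), if_pos (by omega), zero_add, show n + 0 - (n - i) = i by omega] at hb
      exact hb
    · exact hwc i (by omega)
  exact ⟨v /ₘ (X ^ n - 1), by linear_combination hvw + hw0⟩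

lemma pairing_eq (n : ℕ) (hn : 0 < n) (c : ℕ → F) (u : F[X]) :
    ∑ i ∈ range n, c i * (u %ₘ (X ^ n - 1)).coeff i
      = ((u * ∑ i ∈ range n, C (c i) * X ^ (n - i)) %ₘ (X ^ n - 1)).coeff 0 := by
  set W : F[X] := ∑ i ∈ range n, C (c i) * X ^ (n - i) with hW
  set A := u %ₘ (X ^ n - 1) with hA
  have hAc : ∀ m, n ≤ m → A.coeff m = 0 := by
    have hdg : A.degree < (n : ℕ) := by
      rw [← degreeM (F := F) n hn]
      exact degree_modByMonic_lt u (monicM n hn)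
    intro m hm
    exact (degree_lt_iff_coeff_zero A n).1 hdg m (by exact_mod_cast hm)
  have hAnd : A.natDegree ≤ n - 1 :=
    natDegree_le_iff_coeff_eq_zero.2 fun N hN => hAc N (by omega)
  have hWnd : W.natDegree ≤ n :=
    natDegree_le_iff_coeff_eq_zero.2 fun N hN => by
      rw [hW, coeff_sumXpowRev, if_neg (by omega)]
  have h1 : (u * W) %ₘ (X ^ n - 1) = (A * W) %ₘ (X ^ n - 1) :=
    mod_eq_mod n hn ⟨(u /ₘ (X ^ n - 1)) * W, by
      have := modByMonic_add_div u (X ^ n - 1)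
      rw [← sub_mul]
      rw [show u - A = (X ^ n - 1) * (u /ₘ (X ^ n - 1)) by linear_combination -this]
      ring⟩
  have hnd : (A * W).natDegree < 2 * n :=
    lt_of_le_of_lt natDegree_mul_le (by omega)
  rw [h1, coeff_modByMonic_of_lt n hn _ hnd 0 hn]
  have h0 : (A * W).coeff 0 = 0 := by
    rw [mul_coeff_zero, hW, coeff_sumXpowRev, if_neg (by omega), mul_zero]
  have hc : (A * W).coeff (n + 0) = ∑ i ∈ range n, c i * A.coeff i := by
    rw [hW, mul_sum, finset_sum_coeff]
    refine Finset.sum_congr rfl fun i hi => ?_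
    rw [mem_range] at hi
    rw [show A * (C (c i) * X ^ (n - i)) = (C (c i) * A) * X ^ (n - i) by ring,
      coeff_mul_X_pow', if_pos (by omega), show n + 0 - (n - i) = i by omega, coeff_C_mul]
  rw [h0, hc, zero_add]

/-- reversal at level `N`. -/
def revN (N : ℕ) (u : F[X]) : F[X] := X ^ (N - u.natDegree) * u.reverse

lemma revN_coeff {N : ℕ} {u : F[X]} (h : u.natDegree ≤ N) (m : ℕ) :
    (revN N u).coeff m = if m ≤ N then u.coeff (N - m) else 0 := by
  rw [revN, coeff_X_pow_mul']
  by_cases h1 : N - u.natDegree ≤ m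
  · rw [if_pos h1, coeff_reverse]
    by_cases h2 : m ≤ N
    · rw [if_pos h2, revAt_le (by omega), show u.natDegree - (m - (N - u.natDegree)) = N - m
        by omega]
    · rw [if_neg h2, revAt_eq_self_of_lt (by omega)]
      exact coeff_eq_zero_of_natDegree_lt (by omega)
  · rw [if_neg h1]
    by_cases h2 : m ≤ N
    · rw [if_pos h2]
      exact (coeff_eq_zero_of_natDegree_lt (by omega)).symm
    · rw [if_neg h2]

lemma revN_natDegree_le {N : ℕ} {u : F[X]} (h : u.natDegree ≤ N) :
    (revN N u).natDegree ≤ N :=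
  natDegree_le_iff_coeff_eq_zero.2 fun m hm => by rw [revN_coeff h, if_neg (by omega)]

lemma revN_mul {a b : ℕ} {u v : F[X]} (hu : u.natDegree ≤ a) (hv : v.natDegree ≤ b) :
    revN (a + b) (u * v) = revN a u * revN b v := by
  rcases eq_or_ne u 0 with rfl | hu0
  · simp [revN]
  rcases eq_or_ne v 0 with rfl | hv0
  · simp [revN]
  rw [revN, revN, revN, reverse_mul_of_domain, natDegree_mul hu0 hv0,
    show a + b - (u.natDegree + v.natDegree) = (a - u.natDegree) + (b - v.natDegree) by omega,
    pow_add]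
  ring

lemma revN_sub {N : ℕ} {u v : F[X]} (hu : u.natDegree ≤ N) (hv : v.natDegree ≤ N) :
    revN N (u - v) = revN N u - revN N v := by
  have huv : (u - v).natDegree ≤ N := le_trans (natDegree_sub_le u v) (max_le hu hv)
  ext m
  rw [coeff_sub, revN_coeff huv, revN_coeff hu, revN_coeff hv]
  by_cases h : m ≤ N
  · rw [if_pos h, if_pos h, if_pos h, coeff_sub]
  · rw [if_neg h, if_neg h, if_neg h, sub_zero]

lemma natDegree_sumXpow_le (n : ℕ) (c : ℕ → F) :
    (∑ i ∈ range n, C (c i) * X ^ i).natDegree ≤ n :=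
  natDegree_le_iff_coeff_eq_zero.2 fun N hN => by rw [coeff_sumXpow, if_neg (by omega)]

lemma natDegree_sumXpowRev_le (n : ℕ) (c : ℕ → F) :
    (∑ i ∈ range n, C (c i) * X ^ (n - i)).natDegree ≤ n :=
  natDegree_le_iff_coeff_eq_zero.2 fun N hN => by rw [coeff_sumXpowRev, if_neg (by omega)]

lemma Y_eq_revN_W (n : ℕ) (hn : 0 < n) (c : ℕ → F) (hc : ∀ i, n ≤ i → c i = 0) :
    (∑ i ∈ range n, C (c i) * X ^ i) = revN n (∑ i ∈ range n, C (c i) * X ^ (n - i)) := by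
  ext m
  rw [coeff_sumXpow, revN_coeff (natDegree_sumXpowRev_le n c) m]
  by_cases h : m ≤ n
  · rw [if_pos h, coeff_sumXpowRev]
    by_cases h2 : m < n
    · rw [if_pos h2, if_pos (by omega), show n - (n - m) = m by omega]
    · rw [if_neg h2, if_neg (by omega)]
  · rw [if_neg (by omega), if_neg h]

lemma reverse_map (σ : F →+* F) (u : F[X]) : (u.map σ).reverse = u.reverse.map σ := by
  have hd : (u.map σ).natDegree = u.natDegree := natDegree_map_eq_of_injective σ.injective u
  ext m
  rw [coeff_map, coeff_reverse, coeff_reverse, hd, coeff_map]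

end Stmt17Aux


open Stmt17Aux

/-- if `f ∣ g ∣ (g^[q])^⊥ ∣ (f^[q])^⊥`, then `Q_{q^2}(f,g,h)` contains its
Hermitian dual. -/
theorem stmt17 [Fintype F] (p r q n : ℕ) (hp : p.Prime) (hr : 0 < r) (hq : q = p ^ r)
    (hF : Fintype.card F = q ^ 2) (hn : 0 < n) (f g h : F[X])
    (hf : f.Monic) (hg : g.Monic) (hh : h.Monic)
    (hfd : f.degree < n) (hgd : g.degree < n) (hhd : h.degree < n)
    (hfdvd : f ∣ X ^ n - 1) (hgdvd : g ∣ X ^ n - 1)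
    (hd1 : f ∣ g) (hd2 : g ∣ perpPoly n (polyQ q g))
    (hd3 : perpPoly n (polyQ q g) ∣ perpPoly n (polyQ q f)) :
    hDualSet q (QCcode n f g h : Set ((Fin n → F) × (Fin n → F))) ⊆
      (QCcode n f g h : Set ((Fin n → F) × (Fin n → F))) := by
  have hq0 : 0 < q := by rw [hq]; exact pow_pos hp.pos r
  -- characteristic
  have hchar : CharP F p := by
    obtain ⟨m, hpr, hcard'⟩ := FiniteField.card F (ringChar F)
    have hpp : p = ringChar F := by
      have heq : p ^ (2 * r) = ringChar F ^ (m : ℕ) := by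
        rw [← hcard', hF, hq, ← pow_mul, mul_comm]
      have hdvd : p ∣ ringChar F ^ (m : ℕ) := heq ▸ dvd_pow_self p (by omega)
      exact (Nat.prime_dvd_prime_iff_eq hp hpr).1 (hp.dvd_of_dvd_pow hdvd)
    rw [hpp]; exact ringChar.charP F
  haveI := Fact.mk hp
  haveI : CharP F p := hchar
  set σ : F →+* F := iterateFrobenius F p r with hσdef
  have hσ : ∀ x : F, σ x = x ^ q := fun x => by rw [hσdef, iterateFrobenius_def, hq]
  have hσσ : ∀ x : F, σ (σ x) = x := by
    intro x
    rw [hσ, hσ, ← pow_mul, show q * q = Fintype.card F by rw [hF]; ring]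
    exact FiniteField.pow_card x
  have hmapσσ : ∀ u : F[X], (u.map σ).map σ = u := by
    intro u
    rw [Polynomial.map_map, show σ.comp σ = RingHom.id F from RingHom.ext hσσ, map_id]
  have hpolyQ : ∀ u : F[X], polyQ q u = u.map σ := by
    intro u
    ext m
    rw [polyQ, finset_sum_coeff, coeff_map]
    simp only [coeff_C_mul, coeff_X_pow, mul_ite, mul_one, mul_zero, Finset.sum_ite_eq,
      hσ (u.coeff m)]
    by_cases hm : m ∈ u.support
    · rw [if_pos hm]
    · rw [if_neg hm, notMem_support_iff.1 hm, zero_pow hq0.ne']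
  have hMne : (X ^ n - 1 : F[X]) ≠ 0 := (monicM n hn).ne_zero
  have hMσ : (X ^ n - 1 : F[X]).map σ = X ^ n - 1 := by
    rw [Polynomial.map_sub, Polynomial.map_pow, map_X, Polynomial.map_one]
  have hMnd : (X ^ n - 1 : F[X]).natDegree = n :=
    natDegree_eq_of_degree_eq_some (degreeM n hn)
  -- cofactors
  set g' : F[X] := (X ^ n - 1) /ₘ g with hg'def
  have hgg' : g * g' = X ^ n - 1 := by
    have h0 : (X ^ n - 1 : F[X]) %ₘ g = 0 := (modByMonic_eq_zero_iff_dvd hg).2 hgdvd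
    have h1 := modByMonic_add_div (X ^ n - 1 : F[X]) g
    rw [h0, zero_add] at h1; exact h1
  set f' : F[X] := (X ^ n - 1) /ₘ f with hf'def
  have hff' : f * f' = X ^ n - 1 := by
    have h0 : (X ^ n - 1 : F[X]) %ₘ f = 0 := (modByMonic_eq_zero_iff_dvd hf).2 hfdvd
    have h1 := modByMonic_add_div (X ^ n - 1 : F[X]) f
    rw [h0, zero_add] at h1; exact h1
  have hg'0 : g' ≠ 0 := fun h0 => hMne (by rw [← hgg', h0, mul_zero])
  have hf'0 : f' ≠ 0 := fun h0 => hMne (by rw [← hff', h0, mul_zero])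
  have hndg' : g.natDegree + g'.natDegree = n := by
    rw [← hMnd, ← hgg', natDegree_mul hg.ne_zero hg'0]
  have hndf' : f.natDegree + f'.natDegree = n := by
    rw [← hMnd, ← hff', natDegree_mul hf.ne_zero hf'0]
  -- perp polynomials
  have hperpg : perpPoly n (polyQ q g) = (g'.map σ).reverse := by
    rw [perpPoly, hpolyQ]
    congr 1
    have hM : (g.map σ) * (g'.map σ) = X ^ n - 1 := by
      rw [← Polynomial.map_mul, hgg', hMσ]
    rw [← hM, mul_divByMonic_cancel_left _ (hg.map σ)]
  have hperpf : perpPoly n (polyQ q f) = (f'.map σ).reverse := by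
    rw [perpPoly, hpolyQ]
    congr 1
    have hM : (f.map σ) * (f'.map σ) = X ^ n - 1 := by
      rw [← Polynomial.map_mul, hff', hMσ]
    rw [← hM, mul_divByMonic_cancel_left _ (hf.map σ)]
  rw [hperpg] at hd2
  rw [hperpg, hperpf] at hd3
  -- now the main argument
  rintro ⟨x1, x2⟩ hx
  set c1 : ℕ → F := fun m => if hm : m < n then x1 ⟨m, hm⟩ else 0 with hc1def
  set c2 : ℕ → F := fun m => if hm : m < n then x2 ⟨m, hm⟩ else 0 with hc2def
  have hc1v : ∀ m, n ≤ m → c1 m = 0 := fun m hm => dif_neg (by omega)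
  have hc2v : ∀ m, n ≤ m → c2 m = 0 := fun m hm => dif_neg (by omega)
  set P1 : F[X] := ∑ i ∈ range n, C (c1 i) * X ^ i with hP1def
  set P2 : F[X] := ∑ i ∈ range n, C (c2 i) * X ^ i with hP2def
  set Y1 : F[X] := ∑ i ∈ range n, C (c1 i ^ q) * X ^ i with hY1def
  set Y2 : F[X] := ∑ i ∈ range n, C (c2 i ^ q) * X ^ i with hY2def
  set W1 : F[X] := ∑ i ∈ range n, C (c1 i ^ q) * X ^ (n - i) with hW1def
  set W2 : F[X] := ∑ i ∈ range n, C (c2 i ^ q) * X ^ (n - i) with hW2def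
  have hP1c : ∀ m, P1.coeff m = if m < n then c1 m else 0 := fun m => coeff_sumXpow n c1 m
  have hP2c : ∀ m, P2.coeff m = if m < n then c2 m else 0 := fun m => coeff_sumXpow n c2 m
  have hY1c : ∀ m, Y1.coeff m = if m < n then c1 m ^ q else 0 := fun m =>
    coeff_sumXpow n (fun j => c1 j ^ q) m
  have hY2c : ∀ m, Y2.coeff m = if m < n then c2 m ^ q else 0 := fun m =>
    coeff_sumXpow n (fun j => c2 j ^ q) m
  have hY1map : Y1 = P1.map σ := by
    ext m
    rw [hY1c m, coeff_map, hP1c m, hσ]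
    by_cases hm : m < n
    · rw [if_pos hm, if_pos hm]
    · rw [if_neg hm, if_neg hm, zero_pow hq0.ne']
  have hY2map : Y2 = P2.map σ := by
    ext m
    rw [hY2c m, coeff_map, hP2c m, hσ]
    by_cases hm : m < n
    · rw [if_pos hm, if_pos hm]
    · rw [if_neg hm, if_neg hm, zero_pow hq0.ne']
  have hP1map : Y1.map σ = P1 := by rw [hY1map, hmapσσ]
  have hP2map : Y2.map σ = P2 := by rw [hY2map, hmapσσ]
  -- vecOf of P1, P2
  have hdegP1 : P1.degree < ((X : F[X]) ^ n - 1).degree := by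
    rw [degreeM n hn, degree_lt_iff_coeff_zero]
    intro m hm
    have hm' : n ≤ m := by exact_mod_cast hm
    rw [hP1c m, if_neg (by omega)]
  have hdegP2 : P2.degree < ((X : F[X]) ^ n - 1).degree := by
    rw [degreeM n hn, degree_lt_iff_coeff_zero]
    intro m hm
    have hm' : n ≤ m := by exact_mod_cast hm
    rw [hP2c m, if_neg (by omega)]
  have hvec1 : vecOf n P1 = x1 := by
    funext i
    show (P1 %ₘ (X ^ n - 1)).coeff ↑i = x1 i
    rw [(modByMonic_eq_self_iff (monicM n hn)).2 hdegP1, hP1c ↑i, if_pos i.isLt, hc1def]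
    simp
  have hvec2 : vecOf n P2 = x2 := by
    funext i
    show (P2 %ₘ (X ^ n - 1)).coeff ↑i = x2 i
    rw [(modByMonic_eq_self_iff (monicM n hn)).2 hdegP2, hP2c ↑i, if_pos i.isLt, hc2def]
    simp
  -- extract the duality conditions
  have hdual : ∀ a b : F[X],
      ((a * f * W1) %ₘ (X ^ n - 1)).coeff 0
        + (((a * h * f + b * g) * W2) %ₘ (X ^ n - 1)).coeff 0 = 0 := by
    intro a b
    have hmem : (vecOf n (a * f), vecOf n (a * h * f + b * g))
        ∈ (QCcode n f g h : Set ((Fin n → F) × (Fin n → F))) := ⟨a, b, rfl⟩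
    have hz := hx _ hmem
    rw [hInn2] at hz
    have e1 : ∀ u : F[X], (∑ i : Fin n, x1 i ^ q * vecOf n u i)
        = ((u * W1) %ₘ (X ^ n - 1)).coeff 0 := by
      intro u
      have h2 : (∑ i ∈ range n, c1 i ^ q * (u %ₘ (X ^ n - 1)).coeff i)
          = ((u * ∑ i ∈ range n, C (c1 i ^ q) * X ^ (n - i)) %ₘ (X ^ n - 1)).coeff 0 :=
        pairing_eq n hn (fun j => c1 j ^ q) u
      have h3 : (∑ i : Fin n, c1 ↑i ^ q * (u %ₘ (X ^ n - 1)).coeff ↑i)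
          = ∑ i ∈ range n, c1 i ^ q * (u %ₘ (X ^ n - 1)).coeff i :=
        Fin.sum_univ_eq_sum_range (fun j => c1 j ^ q * (u %ₘ (X ^ n - 1)).coeff j) n
      rw [hW1def, ← h2, ← h3]
      refine Finset.sum_congr rfl fun i _ => ?_
      have hci : c1 ↑i = x1 i := by rw [hc1def]; simp
      rw [hci]
      rfl
    have e2 : ∀ u : F[X], (∑ i : Fin n, x2 i ^ q * vecOf n u i)
        = ((u * W2) %ₘ (X ^ n - 1)).coeff 0 := by
      intro u
      have h2 : (∑ i ∈ range n, c2 i ^ q * (u %ₘ (X ^ n - 1)).coeff i)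
          = ((u * ∑ i ∈ range n, C (c2 i ^ q) * X ^ (n - i)) %ₘ (X ^ n - 1)).coeff 0 :=
        pairing_eq n hn (fun j => c2 j ^ q) u
      have h3 : (∑ i : Fin n, c2 ↑i ^ q * (u %ₘ (X ^ n - 1)).coeff ↑i)
          = ∑ i ∈ range n, c2 i ^ q * (u %ₘ (X ^ n - 1)).coeff i :=
        Fin.sum_univ_eq_sum_range (fun j => c2 j ^ q * (u %ₘ (X ^ n - 1)).coeff j) n
      rw [hW2def, ← h2, ← h3]
      refine Finset.sum_congr rfl fun i _ => ?_
      have hci : c2 ↑i = x2 i := by rw [hc2def]; simp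
      rw [hci]
      rfl
    rw [e1 (a * f), e2 (a * h * f + b * g)] at hz
    exact hz
  have hdvd_g : (X ^ n - 1 : F[X]) ∣ g * W2 := by
    refine dvd_of_forall_phi n hn _ fun b => ?_
    have hz := hdual 0 b
    rw [show (0 : F[X]) * f * W1 = 0 by ring, zero_modByMonic, coeff_zero, zero_add,
      show ((0 : F[X]) * h * f + b * g) * W2 = b * (g * W2) by ring] at hz
    exact hz
  have hdvd_f : (X ^ n - 1 : F[X]) ∣ f * W1 + h * f * W2 := by
    refine dvd_of_forall_phi n hn _ fun a => ?_
    have hz := hdual a 0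
    rw [show ((a * h * f + 0 * g) * W2) = a * h * f * W2 by ring, ← coeff_add,
      ← add_modByMonic,
      show a * f * W1 + a * h * f * W2 = a * (f * W1 + h * f * W2) by ring] at hz
    exact hz
  -- obtain cofactor equations
  obtain ⟨k, hk⟩ := hdvd_g
  have hW2k : W2 = g' * k := by
    apply mul_left_cancel₀ hg.ne_zero
    linear_combination hk - k * hgg'
  obtain ⟨k'', hk''⟩ := hdvd_f
  have hW1k : W1 + h * W2 = f' * k'' := by
    apply mul_left_cancel₀ hf.ne_zero
    linear_combination hk'' - k'' * hff'
  -- degree bookkeeping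
  have hndW1 : W1.natDegree ≤ n := natDegree_sumXpowRev_le n (fun j => c1 j ^ q)
  have hndW2 : W2.natDegree ≤ n := natDegree_sumXpowRev_le n (fun j => c2 j ^ q)
  have hndh : h.natDegree ≤ n := natDegree_le_iff_degree_le.2 hhd.le
  -- Y2 from W2
  have hYW2 : Y2 = revN n W2 :=
    Y_eq_revN_W n hn (fun j => c2 j ^ q)
      (fun i hi => by show c2 i ^ q = 0; rw [hc2v i hi]; exact zero_pow hq0.ne')
  have hndk : k.natDegree ≤ n - g'.natDegree := by
    rcases eq_or_ne k 0 with rfl | hk0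
    · simp
    · have hnd := natDegree_mul hg'0 hk0
      rw [← hW2k] at hnd
      omega
  have hY2fact : Y2 = g'.reverse * revN (n - g'.natDegree) k := by
    have e : revN (g'.natDegree + (n - g'.natDegree)) (g' * k)
        = revN g'.natDegree g' * revN (n - g'.natDegree) k := revN_mul le_rfl hndk
    rw [show g'.natDegree + (n - g'.natDegree) = n by omega] at e
    rw [hYW2, hW2k, e]
    congr 1
    rw [revN, Nat.sub_self, pow_zero, one_mul]
  -- Y1 equation
  have hY1 : Y1 = revN n W1 :=
    Y_eq_revN_W n hn (fun j => c1 j ^ q)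
      (fun i hi => by show c1 i ^ q = 0; rw [hc1v i hi]; exact zero_pow hq0.ne')
  have hndfk : (f' * k'').natDegree ≤ 2 * n := by
    rw [← hW1k]
    refine le_trans (natDegree_add_le _ _) (max_le (by omega)
      (le_trans natDegree_mul_le (by omega)))
  have hndk'' : k''.natDegree ≤ 2 * n - f'.natDegree := by
    rcases eq_or_ne k'' 0 with rfl | hk0
    · simp
    · have hnd := natDegree_mul hf'0 hk0
      omega
  have hrev1 : revN (2 * n) W1 = revN (2 * n) (f' * k'') - revN (2 * n) (h * W2) := by
    rw [show W1 = f' * k'' - h * W2 by linear_combination hW1k]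
    exact revN_sub hndfk (le_trans natDegree_mul_le (by omega))
  have hrevW1 : revN (2 * n) W1 = X ^ n * Y1 := by
    have e : revN (n + n) ((1 : F[X]) * W1) = revN n 1 * revN n W1 :=
      revN_mul (by simp) hndW1
    rw [one_mul, show n + n = 2 * n by ring] at e
    rw [e, ← hY1]
    congr 1
    rw [revN, show (1 : F[X]).reverse = 1 by rw [← Polynomial.C_1, reverse_C],
      natDegree_one, Nat.sub_zero, mul_one]
  have hrevfk : revN (2 * n) (f' * k'') = f'.reverse * revN (2 * n - f'.natDegree) k'' := by
    have e : revN (f'.natDegree + (2 * n - f'.natDegree)) (f' * k'')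
        = revN f'.natDegree f' * revN (2 * n - f'.natDegree) k'' := revN_mul le_rfl hndk''
    rw [show f'.natDegree + (2 * n - f'.natDegree) = 2 * n by omega] at e
    rw [e]
    congr 1
    rw [revN, Nat.sub_self, pow_zero, one_mul]
  have hrevhW2 : revN (2 * n) (h * W2) = revN n h * Y2 := by
    have e : revN (n + n) (h * W2) = revN n h * revN n W2 := revN_mul hndh hndW2
    rw [show n + n = 2 * n by ring] at e
    rw [e, hYW2]
  have hmain : X ^ n * Y1 = f'.reverse * revN (2 * n - f'.natDegree) k''
      - revN n h * Y2 := by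
    rw [← hrevfk, ← hrevhW2, ← hrevW1, hrev1]
  -- apply map σ
  have hmainσ : X ^ n * P1 = (f'.map σ).reverse * (revN (2 * n - f'.natDegree) k'').map σ
      - (revN n h).map σ * P2 := by
    have hmm := congrArg (Polynomial.map σ) hmain
    rw [Polynomial.map_mul, Polynomial.map_sub, Polynomial.map_mul, Polynomial.map_mul,
      Polynomial.map_pow, map_X, hP1map, hP2map] at hmm
    rw [hmm, reverse_map]
  have hP2fact : P2 = (g'.map σ).reverse * (revN (n - g'.natDegree) k).map σ := by
    rw [← hP2map, hY2fact, Polynomial.map_mul, reverse_map]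
  -- use the divisibility hypotheses
  obtain ⟨s, hs⟩ := hd2
  obtain ⟨t, ht⟩ := hd3
  obtain ⟨uu, huu⟩ := hd1
  set K2 : F[X] := (revN (n - g'.natDegree) k).map σ with hK2def
  set K4 : F[X] := (revN (2 * n - f'.natDegree) k'').map σ with hK4def
  set Hσ : F[X] := (revN n h).map σ with hHσdef
  have hXnP1 : X ^ n * P1 = (uu * s * (t * K4 - Hσ * K2)) * f := by
    rw [hmainσ, ht, hs, hP2fact, hs, huu]
    ring
  have hab : (uu * s * (t * K4 - Hσ * K2)) * h * f
      + (s * K2 - s * (t * K4 - Hσ * K2) * h) * g = P2 := by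
    rw [hP2fact, hs, huu]
    ring
  show (x1, x2) ∈ {v : (Fin n → F) × (Fin n → F) |
    ∃ a b : F[X], v = (vecOf n (a * f), vecOf n (a * h * f + b * g))}
  refine ⟨uu * s * (t * K4 - Hσ * K2), s * K2 - s * (t * K4 - Hσ * K2) * h, ?_⟩
  have hfirst : vecOf n ((uu * s * (t * K4 - Hσ * K2)) * f) = x1 := by
    rw [← hvec1]
    funext i
    show (((uu * s * (t * K4 - Hσ * K2)) * f) %ₘ (X ^ n - 1)).coeff ↑i
      = (P1 %ₘ (X ^ n - 1)).coeff ↑i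
    have hdv : (X ^ n - 1 : F[X]) ∣ ((uu * s * (t * K4 - Hσ * K2)) * f) - P1 :=
      ⟨P1, by linear_combination -hXnP1⟩
    rw [mod_eq_mod n hn hdv]
  have hsecond : vecOf n ((uu * s * (t * K4 - Hσ * K2)) * h * f
      + (s * K2 - s * (t * K4 - Hσ * K2) * h) * g) = x2 := by
    rw [hab, hvec2]
  rw [hfirst, hsecond]


end
end
end
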